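/- arXiv:1911.05467 — 5 statements merged into one kernel-verified Lean document; each statement's English description precedes it below -/
import Mathlib

section
/- Let m ≥ 0 be an integer, let N = 2^{m+1} − 1, and let c₀, …, c_N be real numbers. Then there exist real numbers c̃₀, …, c̃_N such that ∑_{j=0}^{N} c_j T_j(x) = ∑_{j=0}^{N} c̃_j Ĥ_j(x) for all real x, and moreover, for every n ≤ N, if c_j = 0 for all j with n < j ≤ N then c̃_j = 0 for all j with n < j ≤ N. -/
open scoped Classical

noncomputable section

/-- Chebyshev polynomials of the first kind, as functions `ℝ → ℝ`:
`T 0 x = 1`, `T 1 x = x`, `T (n+2) x = 2x * T (n+1) x - T n x`. -/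
def chebT : ℕ → ℝ → ℝ
  | 0, _ => 1
  | 1, x => x
  | n + 2, x => 2 * x * chebT (n + 1) x - chebT n x

/-- Rectified power unit `σ_s(x) = max(0,x)^s`. -/
def repu (s : ℕ) (x : ℝ) : ℝ := (max 0 x) ^ s

/-- A feed-forward neural network with `L` layers: layer widths `width 0, …, width L`
(`width 0` is the input dimension, `width L` the output dimension), weight matrices
`A k` and bias vectors `b k` for `k = 1, …, L` (entries outside the relevant ranges
are irrelevant). -/
structure Net where
  L : ℕ
  width : ℕ → ℕ
  A : ℕ → ℕ → ℕ → ℝ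
  b : ℕ → ℕ → ℝ

namespace Net

/-- The state `x_k` of the network on input `x` with activation `σ`:
`x_0 = x`, `x_{k+1} = σ(A_{k+1} x_k + b_{k+1})` componentwise. -/
def fwd (σ : ℝ → ℝ) (Φ : Net) (x : ℕ → ℝ) : ℕ → ℕ → ℝ
  | 0 => x
  | k + 1 => fun i =>
      σ ((∑ j ∈ Finset.range (Φ.width k), Φ.A (k + 1) i j * Φ.fwd σ x k j) + Φ.b (k + 1) i)

/-- The realization `R(Φ)(x) = A_L x_{L-1} + b_L` (no activation on the last layer). -/
def realize (σ : ℝ → ℝ) (Φ : Net) (x : ℕ → ℝ) : ℕ → ℝ := fun i =>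
  (∑ j ∈ Finset.range (Φ.width (Φ.L - 1)), Φ.A Φ.L i j * Φ.fwd σ x (Φ.L - 1) j) + Φ.b Φ.L i

/-- Number of hidden layers. -/
def hiddenLayers (Φ : Net) : ℕ := Φ.L - 1

/-- Number of neurons (activation functions): total width of the hidden layers. -/
def neurons (Φ : Net) : ℕ := ∑ k ∈ Finset.Ico 1 Φ.L, Φ.width k

/-- Number of nonzero weights: nonzero entries of all the `A_k` and `b_k`. -/
def nonzeroWeights (Φ : Net) : ℕ :=
  ∑ k ∈ Finset.Icc 1 Φ.L,
    ((((Finset.range (Φ.width k)) ×ˢ (Finset.range (Φ.width (k - 1)))).filter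
        (fun p => Φ.A k p.1 p.2 ≠ 0)).card
      + ((Finset.range (Φ.width k)).filter (fun i => Φ.b k i ≠ 0)).card)

end Net

/-- Hierarchical Chebyshev functions: `Ĥ n = T n` for `n = 0,1,2` and
`Ĥ n (x) = T_{2^m}(x) · Ĥ_{n-2^m}(x)` for `n ≥ 3`, where `m = ⌊log₂ n⌋`. -/
def hierT : ℕ → ℝ → ℝ
  | 0, _ => 1
  | 1, x => x
  | 2, x => chebT 2 x
  | n + 3, x =>
      chebT (2 ^ Nat.log 2 (n + 3)) x * hierT ((n + 3) - 2 ^ Nat.log 2 (n + 3)) x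
  decreasing_by
    exact Nat.sub_lt (Nat.succ_pos _) (by positivity)

lemma chebT_eval : ∀ (n : ℕ) (x : ℝ), chebT n x = (Polynomial.Chebyshev.T ℝ (n : ℤ)).eval x
  | 0, x => by simp [chebT]
  | 1, x => by simp [chebT]
  | n + 2, x => by
      have h1 := chebT_eval (n + 1) x
      have h0 := chebT_eval n x
      push_cast
      rw [Polynomial.Chebyshev.T_add_two]
      simp only [chebT, h1, h0, Polynomial.eval_sub, Polynomial.eval_mul,
        Polynomial.eval_ofNat, Polynomial.eval_X]
      push_cast
      ring

lemma chebT_mul (a b : ℕ) (h : b ≤ a) (x : ℝ) :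
    2 * (chebT a x * chebT b x) = chebT (a + b) x + chebT (a - b) x := by
  have := congrArg (Polynomial.eval x) (Polynomial.Chebyshev.T_mul_T ℝ (a : ℤ) (b : ℤ))
  rw [chebT_eval, chebT_eval, chebT_eval, chebT_eval]
  have hc : ((a - b : ℕ) : ℤ) = (a : ℤ) - b := by omega
  have hc2 : ((a + b : ℕ) : ℤ) = (a : ℤ) + b := by push_cast; ring
  rw [hc, hc2]
  simpa [mul_assoc] using this

lemma hier_expand (n : ℕ) : ∃ a : ℝ, a ≠ 0 ∧ ∃ d : ℕ → ℝ,
    ∀ x, hierT n x = a * chebT n x + ∑ j ∈ Finset.range n, d j * chebT j x := by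
  induction n using Nat.strong_induction_on with
  | _ n ih =>
  match n, ih with
  | 0, _ => exact ⟨1, one_ne_zero, 0, fun x => by simp [hierT, chebT]⟩
  | 1, _ => exact ⟨1, one_ne_zero, 0, fun x => by simp [hierT, chebT]⟩
  | 2, _ => exact ⟨1, one_ne_zero, 0, fun x => by simp [hierT]⟩
  | t + 3, ih =>
    have hEq0 : ∀ x : ℝ, hierT (t + 3) x =
        chebT (2 ^ Nat.log 2 (t + 3)) x * hierT ((t + 3) - 2 ^ Nat.log 2 (t + 3)) x :=
      fun x => by rw [hierT]
    set p := 2 ^ Nat.log 2 (t + 3) with hp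
    have hpn : p ≤ t + 3 := Nat.pow_log_le_self 2 (by omega)
    have hlt : t + 3 < 2 * p := by
      have h2 := Nat.lt_pow_succ_log_self (by norm_num : 1 < 2) (t + 3)
      rw [pow_succ, ← hp] at h2
      omega
    set k := t + 3 - p with hkd
    obtain ⟨a₀, ha₀, d₀, hd₀⟩ := ih k (by omega)
    by_cases hk0 : k = 0
    · have hpe : p = t + 3 := by omega
      refine ⟨1, one_ne_zero, 0, fun x => ?_⟩
      rw [hEq0 x, hk0, ← hpe]
      have h0 : hierT 0 x = 1 := by rw [hierT]
      simp [h0]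
    · have hkp : k < p := by omega
      refine ⟨a₀ / 2, div_ne_zero ha₀ two_ne_zero, fun i =>
        (if i = p - k then a₀ / 2 else 0)
          + ∑ j ∈ Finset.range k, (d₀ j / 2) *
              ((if i = p + j then (1:ℝ) else 0) + (if i = p - j then (1:ℝ) else 0)),
        fun x => ?_⟩
      have key : ∀ (cc : ℕ) (v : ℝ), cc < t + 3 →
          ∑ i ∈ Finset.range (t + 3), (if i = cc then v else 0) * chebT i x = v * chebT cc x := by
        intro cc v hcc
        rw [Finset.sum_eq_single cc]
        · simp
        · intro b _ hb; simp [hb]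
        · intro h; exact absurd (Finset.mem_range.mpr hcc) h
      have inner : ∀ j ∈ Finset.range k,
          ∑ i ∈ Finset.range (t + 3), ((d₀ j / 2) *
              ((if i = p + j then (1:ℝ) else 0) + (if i = p - j then (1:ℝ) else 0))) * chebT i x
            = d₀ j * (chebT p x * chebT j x) := by
        intro j hj
        rw [Finset.mem_range] at hj
        have e1 : ∀ i, ((d₀ j / 2) *
              ((if i = p + j then (1:ℝ) else 0) + (if i = p - j then (1:ℝ) else 0))) * chebT i x
            = (if i = p + j then d₀ j / 2 else 0) * chebT i x
              + (if i = p - j then d₀ j / 2 else 0) * chebT i x := by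
          intro i
          rcases eq_or_ne j 0 with rfl | hj0
          · simp only [Nat.add_zero, Nat.sub_zero]
            by_cases h1 : i = p <;> simp [h1] <;> ring
          · have hne : p + j ≠ p - j := by omega
            by_cases h1 : i = p + j
            · subst h1
              rw [if_pos rfl, if_neg hne, if_pos rfl, if_neg hne]
              ring
            · by_cases h2 : i = p - j
              · subst h2
                rw [if_neg (by omega), if_pos rfl, if_neg (by omega), if_pos rfl]
                ring
              · rw [if_neg h1, if_neg h2, if_neg h1, if_neg h2]
                ring
        rw [Finset.sum_congr rfl (fun i _ => e1 i), Finset.sum_add_distrib,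
          key _ _ (by omega), key _ _ (by omega)]
        have hm := chebT_mul p j (by omega) x
        linear_combination (-(d₀ j / 2)) * hm
      have hsum : ∑ i ∈ Finset.range (t + 3),
          ((if i = p - k then a₀ / 2 else 0)
            + ∑ j ∈ Finset.range k, (d₀ j / 2) *
                ((if i = p + j then (1:ℝ) else 0) + (if i = p - j then (1:ℝ) else 0))) * chebT i x
          = a₀ / 2 * chebT (p - k) x
            + chebT p x * ∑ j ∈ Finset.range k, d₀ j * chebT j x := by
        simp only [add_mul, Finset.sum_add_distrib, Finset.sum_mul]
        rw [key _ _ (by omega), Finset.sum_comm, Finset.sum_congr rfl inner, Finset.mul_sum]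
        exact congrArg₂ (· + ·) rfl (Finset.sum_congr rfl fun i _ => by ring)
      rw [hsum]
      have hm := chebT_mul p k (by omega) x
      have hpk : p + k = t + 3 := by omega
      rw [hpk] at hm
      have h1 := hEq0 x
      have h2 := hd₀ x
      linear_combination h1 + chebT p x * h2 + (a₀ / 2) * hm

lemma cheb_in_hier (n : ℕ) : ∃ e : ℕ → ℝ,
    ∀ x, chebT n x = ∑ j ∈ Finset.range (n + 1), e j * hierT j x := by
  induction n using Nat.strong_induction_on with
  | _ n ih =>
  obtain ⟨a, ha, d, hd⟩ := hier_expand n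
  let E : ℕ → ℕ → ℝ := fun j => if h : j < n then (ih j h).choose else 0
  have hE : ∀ j (h : j < n) (x : ℝ),
      chebT j x = ∑ i ∈ Finset.range (j + 1), E j i * hierT i x := by
    intro j h x
    simpa [E, dif_pos h] using (ih j h).choose_spec x
  refine ⟨fun i => (if i = n then a⁻¹ else 0)
      - a⁻¹ * ∑ j ∈ Finset.range n, d j * (if i ≤ j then E j i else 0), fun x => ?_⟩
  have key : ∑ i ∈ Finset.range (n + 1), (if i = n then a⁻¹ else 0) * hierT i x
      = a⁻¹ * hierT n x := by
    rw [Finset.sum_eq_single n]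
    · simp
    · intro b _ hb; simp [hb]
    · intro h; exact absurd (Finset.self_mem_range_succ n) h
  have inner : ∀ j ∈ Finset.range n,
      ∑ i ∈ Finset.range (n + 1), (d j * (if i ≤ j then E j i else 0)) * hierT i x
        = d j * chebT j x := by
    intro j hj
    rw [Finset.mem_range] at hj
    rw [← Finset.sum_subset (Finset.range_subset_range.mpr (show j + 1 ≤ n + 1 by omega))
        (fun i _ hi => by
          rw [Finset.mem_range, Nat.lt_succ_iff, not_le] at hi
          rw [if_neg (by omega), mul_zero, zero_mul])]
    rw [hE j hj x, Finset.mul_sum]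
    exact Finset.sum_congr rfl fun i hi => by
      rw [Finset.mem_range, Nat.lt_succ_iff] at hi
      rw [if_pos hi]; ring
  have expand : ∀ i, ((if i = n then a⁻¹ else 0)
      - a⁻¹ * ∑ j ∈ Finset.range n, d j * (if i ≤ j then E j i else 0)) * hierT i x
      = (if i = n then a⁻¹ else 0) * hierT i x
        - a⁻¹ * ∑ j ∈ Finset.range n, (d j * (if i ≤ j then E j i else 0)) * hierT i x := by
    intro i
    rw [sub_mul, mul_assoc, Finset.sum_mul]
  rw [Finset.sum_congr rfl (fun i _ => expand i), Finset.sum_sub_distrib, key,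
    ← Finset.mul_sum, Finset.sum_comm, Finset.sum_congr rfl inner, hd x, mul_add,
    ← mul_assoc, inv_mul_cancel₀ ha, one_mul]
  ring

/-- change of basis from Chebyshev to hierarchical Chebyshev, preserving
the pattern of trailing zero coefficients. -/
theorem stmt_2 (m : ℕ) (c : ℕ → ℝ) :
    ∃ ct : ℕ → ℝ,
      (∀ x : ℝ,
        ∑ j ∈ Finset.range (2 ^ (m + 1) - 1 + 1), c j * chebT j x =
          ∑ j ∈ Finset.range (2 ^ (m + 1) - 1 + 1), ct j * hierT j x) ∧
      ∀ n ≤ 2 ^ (m + 1) - 1,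
        (∀ j, n < j → j ≤ 2 ^ (m + 1) - 1 → c j = 0) →
        (∀ j, n < j → j ≤ 2 ^ (m + 1) - 1 → ct j = 0) := by
  set N := 2 ^ (m + 1) - 1 with hN
  let E : ℕ → ℕ → ℝ := fun i => (cheb_in_hier i).choose
  have hE : ∀ i (x : ℝ), chebT i x = ∑ j ∈ Finset.range (i + 1), E i j * hierT j x :=
    fun i x => (cheb_in_hier i).choose_spec x
  refine ⟨fun j => ∑ i ∈ Finset.range (N + 1), c i * (if j ≤ i then E i j else 0), ?_, ?_⟩
  · intro x
    have main : ∀ i ∈ Finset.range (N + 1),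
        ∑ j ∈ Finset.range (N + 1), (c i * (if j ≤ i then E i j else 0)) * hierT j x
          = c i * chebT i x := by
      intro i hi
      rw [Finset.mem_range, Nat.lt_succ_iff] at hi
      rw [← Finset.sum_subset (Finset.range_subset_range.mpr (show i + 1 ≤ N + 1 by omega))
          (fun j _ hj => by
            rw [Finset.mem_range, Nat.lt_succ_iff, not_le] at hj
            rw [if_neg (by omega), mul_zero, zero_mul])]
      rw [hE i x, Finset.mul_sum]
      exact Finset.sum_congr rfl fun j hj => by
        rw [Finset.mem_range, Nat.lt_succ_iff] at hj
        rw [if_pos hj]; ring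
    calc ∑ j ∈ Finset.range (N + 1), c j * chebT j x
        = ∑ i ∈ Finset.range (N + 1), ∑ j ∈ Finset.range (N + 1),
            (c i * (if j ≤ i then E i j else 0)) * hierT j x :=
          (Finset.sum_congr rfl main).symm
      _ = ∑ j ∈ Finset.range (N + 1), ∑ i ∈ Finset.range (N + 1),
            (c i * (if j ≤ i then E i j else 0)) * hierT j x := Finset.sum_comm
      _ = ∑ j ∈ Finset.range (N + 1),
            (∑ i ∈ Finset.range (N + 1), c i * (if j ≤ i then E i j else 0)) * hierT j x :=
          Finset.sum_congr rfl fun j _ => (Finset.sum_mul _ _ _).symm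
  · intro n hn hc j hj1 hj2
    refine Finset.sum_eq_zero fun i hi => ?_
    rw [Finset.mem_range, Nat.lt_succ_iff] at hi
    by_cases h : j ≤ i
    · rw [hc i (by omega) hi, zero_mul]
    · rw [if_neg h, mul_zero]
end
end

section
/- There exists a constant C > 0 such that for every integer m ≥ 1 there exists a σ₂-network Φ with input dimension N₀ = 1, output dimension 1, exactly m hidden layers each of width 2 (so 2m neurons in total), and at most C·m nonzero weights, whose realization satisfies R(Φ)(x) = T_{2^m}(x) for all real x. -/
open scoped Classical

noncomputable section

lemma chebT_eq (n : ℕ) (x : ℝ) : chebT n x = (Polynomial.Chebyshev.T ℝ n).eval x := by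
  induction n using Nat.twoStepInduction with
  | zero => simp [chebT, Polynomial.Chebyshev.T_zero]
  | one => simp [chebT, Polynomial.Chebyshev.T_one]
  | more n ih1 ih2 =>
    rw [show ((n+2:ℕ):ℤ) = (n:ℤ) + 2 by push_cast; ring,
      Polynomial.Chebyshev.T_add_two]
    simp [chebT, ih1, ih2, show ((n+1:ℕ):ℤ) = (n:ℤ)+1 by push_cast; ring]

lemma chebT_double (n : ℕ) (x : ℝ) : chebT (2*n) x = 2 * (chebT n x)^2 - 1 := by
  rw [chebT_eq, chebT_eq]
  rw [show ((2*n:ℕ):ℤ) = 2 * (n:ℤ) by push_cast; ring, Polynomial.Chebyshev.T_mul,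
    Polynomial.Chebyshev.T_two]
  simp [Polynomial.eval_comp]

lemma repu_add (y : ℝ) : repu 2 y + repu 2 (-y) = y ^ 2 := by
  rcases le_total 0 y with h | h
  · simp [repu, max_eq_right h, max_eq_left (neg_nonpos.mpr h)]
  · simp [repu, max_eq_left h, max_eq_right (neg_nonneg.mpr h), neg_pow]

def myNet (m : ℕ) : Net where
  L := m + 1
  width := fun k => if k = 0 ∨ k = m + 1 then 1 else 2
  A := fun k i j => if k = 1 then (if i = 0 then 1 else if i = 1 then -1 else 0)
       else (if i = 0 then 2 else if i = 1 then -2 else 0)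
  b := fun k i => if k ≤ 1 then 0 else if i = 0 then -1 else if i = 1 then 1 else 0

lemma myNet_fwd (m : ℕ) (hm : 1 ≤ m) (x : ℝ) (k : ℕ) (hk1 : 1 ≤ k) (hkm : k ≤ m) :
    (myNet m).fwd (repu 2) (fun _ => x) k 0 = repu 2 (chebT (2^(k-1)) x) ∧
    (myNet m).fwd (repu 2) (fun _ => x) k 1 = repu 2 (-(chebT (2^(k-1)) x)) := by
  induction k with
  | zero => omega
  | succ k ih =>
    rcases Nat.eq_or_lt_of_le hk1 with h1 | h1
    · -- k = 0, layer 1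
      obtain rfl : k = 0 := by omega
      have hw0 : (myNet m).width 0 = 1 := by simp [myNet]
      constructor <;>
      · simp [Net.fwd, hw0, Finset.sum_range_one, myNet, chebT]
    · -- k ≥ 1
      have hk : 1 ≤ k := by omega
      obtain ⟨ih0, ih1⟩ := ih hk (by omega)
      have hwk : (myNet m).width k = 2 := by
        simp only [myNet]
        rw [if_neg]; omega
      have hkk : k + 1 ≠ 1 := by omega
      have hA0 : ∀ j, (myNet m).A (k+1) 0 j = 2 := by intro j; simp [myNet, hkk]; omega
      have hA1 : ∀ j, (myNet m).A (k+1) 1 j = -2 := by intro j; simp [myNet, hkk]; omega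
      have hb0 : (myNet m).b (k+1) 0 = -1 := by simp [myNet]; omega
      have hb1 : (myNet m).b (k+1) 1 = 1 := by simp [myNet]; omega
      have hsum : ∀ i, (∑ j ∈ Finset.range 2, (myNet m).A (k+1) i j *
          (myNet m).fwd (repu 2) (fun _ => x) k j)
          = (myNet m).A (k+1) i 0 * (repu 2 (chebT (2^(k-1)) x))
            + (myNet m).A (k+1) i 1 * (repu 2 (-(chebT (2^(k-1)) x))) := by
        intro i
        rw [Finset.sum_range_succ, Finset.sum_range_one, ih0, ih1]
      have hTd : 2 * (repu 2 (chebT (2^(k-1)) x) + repu 2 (-(chebT (2^(k-1)) x))) - 1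
          = chebT (2^k) x := by
        rw [repu_add, show (2:ℕ)^k = 2 * 2^(k-1) by
          conv_lhs => rw [show k = (k-1) + 1 by omega]
          ring, chebT_double]
      have hk1' : k + 1 - 1 = k := by omega
      constructor
      · show repu 2 _ = _
        rw [hwk, hsum, hA0, hA0, hb0, hk1', ← hTd]
        congr 1; ring
      · show repu 2 _ = _
        rw [hwk, hsum, hA1, hA1, hb1, hk1', ← hTd]
        congr 1; ring

/-- `T_{2^m}` is realized by a σ₂-network with `m` hidden layers of width 2
and `O(m)` nonzero weights. -/
theorem stmt_3 :
    ∃ C : ℕ, 0 < C ∧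
      ∀ m : ℕ, 1 ≤ m →
        ∃ Φ : Net,
          Φ.L = m + 1 ∧
          Φ.width 0 = 1 ∧
          Φ.width Φ.L = 1 ∧
          (∀ k, 1 ≤ k → k ≤ m → Φ.width k = 2) ∧
          Φ.nonzeroWeights ≤ C * m ∧
          ∀ x : ℝ, Φ.realize (repu 2) (fun _ => x) 0 = chebT (2 ^ m) x := by
  refine ⟨12, by norm_num, fun m hm => ⟨myNet m, rfl, by simp [myNet], by simp [myNet], ?_, ?_, ?_⟩⟩
  · intro k hk1 hkm
    simp only [myNet]
    rw [if_neg]; omega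
  · -- weight count
    have hw : ∀ k, (myNet m).width k ≤ 2 := by
      intro k; simp only [myNet]; split_ifs <;> norm_num
    have hterm : ∀ k, ((((Finset.range ((myNet m).width k)) ×ˢ
          (Finset.range ((myNet m).width (k - 1)))).filter
          (fun p => (myNet m).A k p.1 p.2 ≠ 0)).card
        + ((Finset.range ((myNet m).width k)).filter (fun i => (myNet m).b k i ≠ 0)).card) ≤ 6 := by
      intro k
      have h1 := Finset.card_filter_le ((Finset.range ((myNet m).width k)) ×ˢ
          (Finset.range ((myNet m).width (k - 1)))) (fun p => (myNet m).A k p.1 p.2 ≠ 0)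
      have h2 := Finset.card_filter_le (Finset.range ((myNet m).width k))
          (fun i => (myNet m).b k i ≠ 0)
      rw [Finset.card_product, Finset.card_range, Finset.card_range] at h1
      rw [Finset.card_range] at h2
      have := hw k; have := hw (k-1)
      nlinarith
    calc (myNet m).nonzeroWeights ≤ ∑ _k ∈ Finset.Icc 1 ((myNet m).L), 6 :=
          Finset.sum_le_sum (fun k _ => hterm k)
      _ = 6 * (m + 1) := by
          rw [Finset.sum_const, smul_eq_mul]
          show (Finset.Icc 1 (m+1)).card * 6 = 6 * (m+1)
          rw [Nat.card_Icc]; ring_nf; omega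
      _ ≤ 12 * m := by omega
  · intro x
    obtain ⟨h0, h1⟩ := myNet_fwd m hm x m hm le_rfl
    show (∑ j ∈ Finset.range ((myNet m).width ((myNet m).L - 1)),
        (myNet m).A (myNet m).L 0 j * (myNet m).fwd (repu 2) (fun _ => x) ((myNet m).L - 1) j)
        + (myNet m).b (myNet m).L 0 = chebT (2^m) x
    have hL : (myNet m).L - 1 = m := by simp [myNet]
    have hwm : (myNet m).width m = 2 := by
      simp only [myNet]; rw [if_neg]; omega
    have hA : ∀ j, (myNet m).A (myNet m).L 0 j = 2 := by
      intro j; simp only [myNet]; rw [if_neg]; · simp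
      · omega
    have hb : (myNet m).b (myNet m).L 0 = -1 := by
      show (myNet m).b (m+1) 0 = -1
      simp [myNet]; omega
    rw [hL, hwm, Finset.sum_range_succ, Finset.sum_range_one, h0, h1, hA, hA, hb]
    have : 2 * (repu 2 (chebT (2^(m-1)) x) + repu 2 (-(chebT (2^(m-1)) x))) - 1
        = chebT (2^m) x := by
      rw [repu_add, show (2:ℕ)^m = 2 * 2^(m-1) by
        conv_lhs => rw [show m = (m-1) + 1 by omega]
        ring, chebT_double]
    rw [← this]; ring
end
end

section
/- For all real numbers c₀, c₁, c₂ there exists a σ₂-network Φ with input dimension 1, output dimension 1, exactly one hidden layer of 6 neurons, whose realization satisfies R(Φ)(x) = c₀ + c₁ T₁(x) + c₂ T₂(x) for all real x. -/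
open scoped Classical

noncomputable section

/-- `c₀ + c₁ T₁ + c₂ T₂` is realized by a σ₂-network with one hidden
layer of 6 neurons. -/
theorem stmt_4 (c₀ c₁ c₂ : ℝ) :
    ∃ Φ : Net,
      Φ.L = 2 ∧
      Φ.width 0 = 1 ∧
      Φ.width 1 = 6 ∧
      Φ.width 2 = 1 ∧
      ∀ x : ℝ, Φ.realize (repu 2) (fun _ => x) 0 =
        c₀ + c₁ * chebT 1 x + c₂ * chebT 2 x := by
  refine ⟨{ L := 2
            width := fun k => if k = 0 then 1 else if k = 1 then 6 else 1
            A := fun k i j =>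
              if k = 1 then
                (if i = 0 then 1 else if i = 1 then -1 else if i = 2 then 1
                 else if i = 3 then -1 else 0)
              else
                (if j = 0 ∨ j = 1 then 2 * c₂ - c₁ / 2
                 else if j = 2 ∨ j = 3 then c₁ / 2 else 0)
            b := fun k i =>
              if k = 1 then (if i = 2 then 1 else if i = 3 then -1 else 0)
              else c₀ - c₂ - c₁ / 2 }, rfl, rfl, rfl, rfl, ?_⟩
  intro x
  have key : ∀ u : ℝ, (max 0 u) ^ 2 + (max 0 (-u)) ^ 2 = u ^ 2 := by
    intro u
    rcases le_total 0 u with h | h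
    · rw [max_eq_right h, max_eq_left (by linarith)]; ring
    · rw [max_eq_left h, max_eq_right (by linarith)]; ring
  simp only [Net.realize, Net.fwd, repu, chebT]
  norm_num [Finset.sum_range_succ]
  have h : (-x + -1 : ℝ) = -(x + 1) := by ring
  rw [h]
  linear_combination (2 * c₂ - c₁ / 2) * key x + (c₁ / 2) * key (x + 1)
end
end

section
/- There exists a constant C > 0 such that for every integer n ≥ 1 and all real numbers c₀, c₁, …, c_n, there exists a σ₂-network Φ with input dimension 1, output dimension 1, at most ⌊log₂ n⌋ + 1 hidden layers, at most C·n neurons, and at most C·n nonzero weights, whose realization satisfies R(Φ)(x) = ∑_{j=0}^{n} c_j T_j(x) for all real x. -/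
open scoped Classical

noncomputable section

def wpat : ℕ → ℝ
  | 0 => 1/2 | 1 => 1/2 | 2 => -(1/2) | 3 => -(1/2)
  | 4 => -(1/4) | 5 => -(1/4) | 6 => 1/4 | 7 => 1/4
  | _ => 0

def rcf (k j i : ℕ) : ℝ :=
  if k = 0 then (if j = 1 ∧ i = 0 then 1 else 0)
  else if i / 8 = j then wpat (i % 8) else 0

def Hn (n : ℕ) : ℕ := Nat.log 2 n + 1
def mf (n k : ℕ) : ℕ := min (2^k) n
def Wf (n k : ℕ) : ℕ := if k = 0 then 1 else if k ≤ Hn n then 8 * (mf n k + 1) else 1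
def rcc (k j : ℕ) : ℝ := if k = 0 ∧ j = 0 then 1 else 0
def srcA (n k j τ : ℕ) : ℕ := if j ≤ mf n k then j else if τ ≤ 1 then j - j / 2 else j % 2
def gC (n k j τ i : ℕ) : ℝ := if τ ≤ 1 ∧ ¬ j ≤ mf n k then rcf k (j / 2) i else 0
def gK (n k j τ : ℕ) : ℝ := if τ ≤ 1 ∧ ¬ j ≤ mf n k then rcc k (j / 2) else 1
def epsf (t : ℕ) : ℝ := if t % 2 = 0 then 1 else -1
def sgf (τ : ℕ) : ℝ := if τ % 2 = 0 then 1 else -1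

def Af (n : ℕ) (c : ℕ → ℝ) (ℓ i i' : ℕ) : ℝ :=
  if ℓ = 0 then 0
  else if ℓ ≤ Hn n then
    epsf (i % 8) * (rcf (ℓ - 1) (srcA n (ℓ - 1) (i / 8) (i % 8 / 2)) i'
      + sgf (i % 8 / 2) * gC n (ℓ - 1) (i / 8) (i % 8 / 2) i')
  else ∑ j ∈ Finset.range (n + 1), c j * rcf (Hn n) j i'

def bf (n : ℕ) (c : ℕ → ℝ) (ℓ i : ℕ) : ℝ :=
  if ℓ = 0 then 0
  else if ℓ ≤ Hn n then
    epsf (i % 8) * (rcc (ℓ - 1) (srcA n (ℓ - 1) (i / 8) (i % 8 / 2))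
      + sgf (i % 8 / 2) * gK n (ℓ - 1) (i / 8) (i % 8 / 2))
  else ∑ j ∈ Finset.range (n + 1), c j * rcc (Hn n) j

def netf (n : ℕ) (c : ℕ → ℝ) : Net := ⟨Hn n + 1, Wf n, Af n c, bf n c⟩

lemma repu_pair (z : ℝ) : repu 2 z + repu 2 (-z) = z ^ 2 := by
  rcases le_total 0 z with h | h
  · simp [repu, max_eq_right h, max_eq_left (neg_nonpos.mpr h)]
  · simp [repu, max_eq_left h, max_eq_right (neg_nonneg.mpr h)]

lemma cheb_rec (m : ℕ) (x : ℝ) : chebT (m+2) x = 2*x*chebT (m+1) x - chebT m x := rfl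

lemma cheb_mul (x : ℝ) : ∀ q p : ℕ, q ≤ p → 2 * chebT p x * chebT q x = chebT (p+q) x + chebT (p-q) x := by
  intro q
  induction q using Nat.strong_induction_on with
  | _ q IH =>
    match q with
    | 0 => intro p _; simp [chebT]; ring
    | 1 =>
      intro p hp
      obtain ⟨d, rfl⟩ : ∃ d, p = d + 1 := ⟨p - 1, by omega⟩
      have h' : d + 1 - 1 = d := by omega
      have h'' : d + 1 + 1 = d + 2 := by omega
      rw [h', h'', cheb_rec]
      simp [chebT]
      ring
    | (q+2) =>
      intro p hp
      obtain ⟨d, rfl⟩ : ∃ d, p = d + (q + 2) := ⟨p - (q+2), by omega⟩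
      have h1 := IH (q+1) (by omega) (d + (q+2)) (by omega)
      have h2 := IH q (by omega) (d + (q+2)) (by omega)
      have e1 : d + (q + 2) - (q + 1) = d + 1 := by omega
      have e2 : d + (q + 2) - q = d + 2 := by omega
      have e3 : d + (q + 2) - (q + 2) = d := by omega
      rw [e1] at h1; rw [e2] at h2; rw [e3]
      have e4 : d + (q + 2) + (q + 1) = (d + 2*q + 1) + 2 := by omega
      have e5 : d + (q + 2) + q = d + 2*q + 2 := by omega
      have e6 : d + (q + 2) + (q + 2) = (d + 2*q + 2) + 2 := by omega
      rw [e4] at h1; rw [e5] at h2; rw [e6]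
      have r2 : chebT (d+2) x = 2*x*chebT (d+1) x - chebT d x := cheb_rec d x
      have rq : chebT (q+2) x = 2*x*chebT (q+1) x - chebT q x := cheb_rec q x
      have rg : chebT ((d + 2*q + 2) + 2) x = 2*x*chebT (d + 2*q + 2 + 1) x - chebT (d + 2*q + 2) x := cheb_rec _ x
      have e8 : d + 2*q + 2 + 1 = (d + 2*q + 1) + 2 := by omega
      rw [e8] at rg
      rw [rq, rg]
      linear_combination 2*x*h1 - h2 - r2

lemma sum_rcf {k W j : ℕ} (hk : k ≠ 0) (hW : 8*j+8 ≤ W) (f : ℕ → ℝ) :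
    ∑ i ∈ Finset.range W, rcf k j i * f i
      = (f (8*j) + f (8*j+1) - f (8*j+2) - f (8*j+3))/2
        - (f (8*j+4) + f (8*j+5) - f (8*j+6) - f (8*j+7))/4 := by
  have hsub : Finset.Ico (8*j) (8*j+8) ⊆ Finset.range W := by
    intro i hi
    simp only [Finset.mem_Ico] at hi
    simp only [Finset.mem_range]
    omega
  rw [← Finset.sum_subset hsub (by
    intro i _ hi
    simp only [Finset.mem_Ico, not_and, not_lt] at hi
    have : ¬ (i / 8 = j) := by omega
    simp [rcf, hk, this])]
  rw [Finset.sum_Ico_eq_sum_range]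
  have h8 : 8*j + 8 - 8*j = 8 := by omega
  rw [h8]
  have hv : ∀ t < 8, rcf k j (8*j+t) = wpat t := by
    intro t ht
    have h1 : (8*j+t)/8 = j := by omega
    have h2 : (8*j+t)%8 = t := by omega
    simp [rcf, hk, h1, h2]
  simp only [Finset.sum_range_succ, Finset.sum_range_zero]
  rw [hv 0 (by norm_num), hv 1 (by norm_num), hv 2 (by norm_num), hv 3 (by norm_num),
    hv 4 (by norm_num), hv 5 (by norm_num), hv 6 (by norm_num), hv 7 (by norm_num)]
  simp only [wpat]
  ring_nf

lemma inv (n : ℕ) (hn : 1 ≤ n) (c : ℕ → ℝ) (x : ℝ) :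
    ∀ k, k ≤ Hn n → ∀ j, j ≤ mf n k →
      (∑ i ∈ Finset.range (Wf n k), rcf k j i * Net.fwd (repu 2) (netf n c) (fun _ => x) k i)
        + rcc k j = chebT j x := by
  intro k
  induction k with
  | zero =>
    intro _ j hj
    have hm : mf n 0 = 1 := by simp [mf]; omega
    rw [hm] at hj
    have hw : Wf n 0 = 1 := by simp [Wf]
    rw [hw]
    have hfw : Net.fwd (repu 2) (netf n c) (fun _ => x) 0 0 = x := rfl
    interval_cases j
    · simp [rcf, rcc, chebT, hfw]
    · simp [rcf, rcc, chebT, hfw]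
  | succ k IH =>
    intro hk1 j hj
    have hkH : k ≤ Hn n := by omega
    have key : ∀ a, a ≤ mf n k →
        (∑ i' ∈ Finset.range (Wf n k), rcf k a i' * Net.fwd (repu 2) (netf n c) (fun _ => x) k i')
          + rcc k a = chebT a x := fun a ha => IH hkH a ha
    set fw := Net.fwd (repu 2) (netf n c) (fun _ => x) with hfwdef
    have hP1 : 1 ≤ 2^k := Nat.one_le_two_pow
    have hP2 : 2^(k+1) = 2 * 2^k := by rw [pow_succ]; ring
    have hjm : j ≤ min (2^(k+1)) n := hj
    -- side bounds
    have hsrc : ∀ τ, srcA n k j τ ≤ mf n k := by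
      intro τ
      simp only [srcA]
      by_cases h1 : j ≤ mf n k
      · rw [if_pos h1]; exact h1
      · rw [if_neg h1]
        simp only [mf] at h1 ⊢
        by_cases h2 : τ ≤ 1
        · rw [if_pos h2]; omega
        · rw [if_neg h2]; omega
    have hhalf : ¬ j ≤ mf n k → j / 2 ≤ mf n k := by
      intro h
      simp only [mf] at *
      omega
    set G : ℕ → ℝ := fun τ => if τ ≤ 1 ∧ ¬ j ≤ mf n k then chebT (j/2) x else 1 with hGdef
    have hg : ∀ τ, (∑ i' ∈ Finset.range (Wf n k), gC n k j τ i' * fw k i') + gK n k j τ = G τ := by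
      intro τ
      by_cases hcar : τ ≤ 1 ∧ ¬ j ≤ mf n k
      · simp only [gC, gK, hGdef, if_pos hcar]
        exact key (j/2) (hhalf hcar.2)
      · simp only [gC, gK, hGdef, if_neg hcar]
        simp
    have unf : ∀ i, fw (k+1) i
        = repu 2 ((∑ i' ∈ Finset.range (Wf n k), Af n c (k+1) i i' * fw k i') + bf n c (k+1) i) :=
      fun i => rfl
    have hpre : ∀ t, t < 8 →
        (∑ i' ∈ Finset.range (Wf n k), Af n c (k+1) (8*j+t) i' * fw k i') + bf n c (k+1) (8*j+t)
          = epsf t * (chebT (srcA n k j (t/2)) x + sgf (t/2) * G (t/2)) := by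
      intro t ht
      have h1 : (8*j+t) % 8 = t := by omega
      have h2 : (8*j+t) / 8 = j := by omega
      have hne : ¬ (k+1 = 0) := by omega
      have hk1' : k + 1 - 1 = k := by omega
      simp only [Af, bf, if_neg hne, if_pos hk1, h1, h2, hk1']
      have expand : ∀ i' ∈ Finset.range (Wf n k),
          epsf t * (rcf k (srcA n k j (t/2)) i' + sgf (t/2) * gC n k j (t/2) i') * fw k i'
            = epsf t * (rcf k (srcA n k j (t/2)) i' * fw k i')
              + (epsf t * sgf (t/2)) * (gC n k j (t/2) i' * fw k i') := by
        intro i' _; ring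
      rw [Finset.sum_congr rfl expand, Finset.sum_add_distrib, ← Finset.mul_sum, ← Finset.mul_sum]
      have hr := key _ (hsrc (t/2))
      have hgg := hg (t/2)
      linear_combination epsf t * hr + (epsf t * sgf (t/2)) * hgg
    have hfwd : ∀ t, t < 8 → fw (k+1) (8*j+t)
        = repu 2 (epsf t * (chebT (srcA n k j (t/2)) x + sgf (t/2) * G (t/2))) := by
      intro t ht
      rw [unf, hpre t ht]
    -- pair sums
    have heps0 : epsf 0 = 1 := by norm_num [epsf]
    have heps1 : epsf 1 = -1 := by norm_num [epsf]
    have heps2 : epsf 2 = 1 := by norm_num [epsf]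
    have heps3 : epsf 3 = -1 := by norm_num [epsf]
    have heps4 : epsf 4 = 1 := by norm_num [epsf]
    have heps5 : epsf 5 = -1 := by norm_num [epsf]
    have heps6 : epsf 6 = 1 := by norm_num [epsf]
    have heps7 : epsf 7 = -1 := by norm_num [epsf]
    have q0 : fw (k+1) (8*j) + fw (k+1) (8*j+1) = (chebT (srcA n k j 0) x + sgf 0 * G 0)^2 := by
      have e0 := hfwd 0 (by norm_num)
      have e1 := hfwd 1 (by norm_num)
      simp only [Nat.add_zero, Nat.reduceDiv, heps0, heps1, one_mul, neg_one_mul] at e0 e1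
      rw [e0, e1, repu_pair]
    have q1 : fw (k+1) (8*j+2) + fw (k+1) (8*j+3) = (chebT (srcA n k j 1) x + sgf 1 * G 1)^2 := by
      have e0 := hfwd 2 (by norm_num)
      have e1 := hfwd 3 (by norm_num)
      simp only [Nat.reduceDiv, heps2, heps3, one_mul, neg_one_mul] at e0 e1
      rw [e0, e1, repu_pair]
    have q2 : fw (k+1) (8*j+4) + fw (k+1) (8*j+5) = (chebT (srcA n k j 2) x + sgf 2 * G 2)^2 := by
      have e0 := hfwd 4 (by norm_num)
      have e1 := hfwd 5 (by norm_num)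
      simp only [Nat.reduceDiv, heps4, heps5, one_mul, neg_one_mul] at e0 e1
      rw [e0, e1, repu_pair]
    have q3 : fw (k+1) (8*j+6) + fw (k+1) (8*j+7) = (chebT (srcA n k j 3) x + sgf 3 * G 3)^2 := by
      have e0 := hfwd 6 (by norm_num)
      have e1 := hfwd 7 (by norm_num)
      simp only [Nat.reduceDiv, heps6, heps7, one_mul, neg_one_mul] at e0 e1
      rw [e0, e1, repu_pair]
    have hWbig : 8*j+8 ≤ Wf n (k+1) := by
      have : Wf n (k+1) = 8 * (mf n (k+1) + 1) := by
        simp only [Wf, if_neg (by omega : ¬ (k+1 = 0)), if_pos hk1]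
      omega
    rw [sum_rcf (by omega) hWbig]
    have hrcc : rcc (k+1) j = 0 := by simp [rcc]
    rw [hrcc, add_zero]
    have hmain : (fw (k+1) (8*j) + fw (k+1) (8*j+1) - fw (k+1) (8*j+2) - fw (k+1) (8*j+3))/2
        - (fw (k+1) (8*j+4) + fw (k+1) (8*j+5) - fw (k+1) (8*j+6) - fw (k+1) (8*j+7))/4
        = ((chebT (srcA n k j 0) x + sgf 0 * G 0)^2 - (chebT (srcA n k j 1) x + sgf 1 * G 1)^2)/2
          - ((chebT (srcA n k j 2) x + sgf 2 * G 2)^2 - (chebT (srcA n k j 3) x + sgf 3 * G 3)^2)/4 := by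
      linear_combination q0/2 - q1/2 - q2/4 + q3/4
    rw [hmain]
    by_cases hcar : j ≤ mf n k
    · have hs : ∀ τ, srcA n k j τ = j := fun τ => if_pos hcar
      have hG : ∀ τ, G τ = 1 := by
        intro τ
        simp [hGdef, hcar]
      simp only [hs, hG, sgf]
      norm_num
      ring
    · have hs01 : ∀ τ ≤ 1, srcA n k j τ = j - j/2 := by
        intro τ hτ
        simp [srcA, hcar, hτ]
      have hs23 : ∀ τ, 2 ≤ τ → srcA n k j τ = j % 2 := by
        intro τ hτ
        simp [srcA, hcar, (show ¬ τ ≤ 1 by omega)]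
      have hG01 : ∀ τ ≤ 1, G τ = chebT (j/2) x := by
        intro τ hτ
        simp [hGdef, hcar, hτ]
      have hG23 : ∀ τ, 2 ≤ τ → G τ = 1 := by
        intro τ hτ
        simp [hGdef, hcar, (show ¬ τ ≤ 1 by omega)]
      rw [hs01 0 (by norm_num), hs01 1 (by norm_num), hs23 2 (by norm_num), hs23 3 (by norm_num),
        hG01 0 (by norm_num), hG01 1 (by norm_num), hG23 2 (by norm_num), hG23 3 (by norm_num)]
      have hmul := cheb_mul x (j/2) (j - j/2) (by omega)
      have e1 : j - j/2 + j/2 = j := by omega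
      have e2 : j - j/2 - j/2 = j % 2 := by omega
      rw [e1, e2] at hmul
      simp only [sgf]
      norm_num
      linear_combination hmul


lemma filter_prod_card_le (a b s : ℕ) (P : ℕ → ℕ → ℝ)
    (h : ∀ i, ((Finset.range b).filter (fun j => P i j ≠ 0)).card ≤ s) :
    (((Finset.range a) ×ˢ (Finset.range b)).filter (fun p => P p.1 p.2 ≠ 0)).card ≤ a * s := by
  induction a with
  | zero => simp
  | succ a IH =>
    rw [Finset.range_add_one]
    have : (insert a (Finset.range a)) ×ˢ (Finset.range b)
        = ({a} ×ˢ Finset.range b) ∪ (Finset.range a ×ˢ Finset.range b) := by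
      ext ⟨x, y⟩
      simp only [Finset.mem_product, Finset.mem_insert, Finset.mem_union, Finset.mem_singleton,
        or_and_right, Finset.mem_range]
      try tauto
    rw [this, Finset.filter_union]
    refine le_trans (Finset.card_union_le _ _) ?_
    have h1 : (({a} ×ˢ Finset.range b).filter (fun p => P p.1 p.2 ≠ 0)).card ≤ s := by
      rw [Finset.singleton_product, Finset.filter_map, Finset.card_map]
      exact le_trans (le_of_eq (by congr 1)) (h a)
    have := IH
    calc _ ≤ s + a * s := Nat.add_le_add h1 IH
    _ = (a+1) * s := by ring


lemma two_pow_sum (M : ℕ) : ∑ k ∈ Finset.range M, 2^k = 2^M - 1 := by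
  induction M with
  | zero => simp
  | succ M IH =>
    have h1 : 1 ≤ 2^M := Nat.one_le_two_pow
    rw [Finset.sum_range_succ, IH, pow_succ]
    omega

/-- any Chebyshev expansion of degree `n` is realized exactly by a σ₂-network
with at most `⌊log₂ n⌋ + 1` hidden layers and `O(n)` neurons and nonzero weights. -/
theorem stmt_5 :
    ∃ C : ℕ, 0 < C ∧
      ∀ n : ℕ, 1 ≤ n → ∀ c : ℕ → ℝ,
        ∃ Φ : Net,
          1 ≤ Φ.L ∧
          Φ.width 0 = 1 ∧
          Φ.width Φ.L = 1 ∧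
          Φ.hiddenLayers ≤ Nat.log 2 n + 1 ∧
          Φ.neurons ≤ C * n ∧
          Φ.nonzeroWeights ≤ C * n ∧
          ∀ x : ℝ, Φ.realize (repu 2) (fun _ => x) 0 =
            ∑ j ∈ Finset.range (n + 1), c j * chebT j x := by
  refine ⟨1000, by norm_num, ?_⟩
  intro n hn c
  have hlog : 2 ^ (Nat.log 2 n) ≤ n := Nat.pow_log_le_self 2 (by omega)
  have hlog2 : n < 2 ^ (Hn n) := Nat.lt_pow_succ_log_self (by norm_num) n
  have hHle : Hn n ≤ n := by
    have := Nat.log_lt_self 2 (show n ≠ 0 by omega)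
    simp only [Hn]; omega
  have hmfH : mf n (Hn n) = n := min_eq_right (le_of_lt hlog2)
  have hWH : Wf n (Hn n) = 8 * (n + 1) := by
    simp only [Wf, if_neg (show ¬ Hn n = 0 by simp [Hn]), if_pos (le_refl (Hn n)), hmfH]
  -- neurons bound
  have hneur : Net.neurons (netf n c) ≤ 32 * n := by
    have h0 : Net.neurons (netf n c) = ∑ k ∈ Finset.Ico 1 (Hn n + 1), Wf n k := rfl
    have h1 : ∀ k ∈ Finset.Ico 1 (Hn n + 1), Wf n k = 8 * (mf n k + 1) := by
      intro k hk
      simp only [Finset.mem_Ico] at hk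
      simp only [Wf, if_neg (show ¬ k = 0 by omega), if_pos (show k ≤ Hn n by omega)]
    rw [h0, Finset.sum_congr rfl h1]
    have h2 : ∑ k ∈ Finset.Ico 1 (Hn n), mf n k ≤ 2 * n := by
      calc ∑ k ∈ Finset.Ico 1 (Hn n), mf n k
          ≤ ∑ k ∈ Finset.Ico 1 (Hn n), 2^k :=
            Finset.sum_le_sum (fun k _ => min_le_left _ _)
        _ ≤ ∑ k ∈ Finset.range (Hn n), 2^k := by
            apply Finset.sum_le_sum_of_subset
            intro k hk
            simp only [Finset.mem_Ico] at hk
            simp only [Finset.mem_range]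
            omega
        _ = 2 ^ (Hn n) - 1 := two_pow_sum _
        _ ≤ 2 * n := by
            have : (2:ℕ) ^ (Hn n) = 2 * 2 ^ (Nat.log 2 n) := by
              simp only [Hn]; rw [pow_succ]; ring
            omega
    have h3 : ∑ k ∈ Finset.Ico 1 (Hn n + 1), mf n k
        = (∑ k ∈ Finset.Ico 1 (Hn n), mf n k) + mf n (Hn n) := by
      rw [Finset.sum_Ico_succ_top (show 1 ≤ Hn n by unfold Hn; omega)]
    have h4 : ∑ k ∈ Finset.Ico 1 (Hn n + 1), 8 * (mf n k + 1)
        = 8 * (∑ k ∈ Finset.Ico 1 (Hn n + 1), mf n k) + 8 * Hn n := by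
      have e : ∀ k ∈ Finset.Ico 1 (Hn n + 1), 8 * (mf n k + 1) = 8 * mf n k + 8 :=
        fun k _ => by ring
      rw [Finset.sum_congr rfl e, Finset.sum_add_distrib, ← Finset.mul_sum, Finset.sum_const,
        Nat.card_Ico]
      simp only [smul_eq_mul]
      omega
    rw [h4]
    omega
  -- row sparsity for hidden layers
  have hrow : ∀ k, 1 ≤ k → k ≤ Hn n → ∀ i,
      ((Finset.range (Wf n (k-1))).filter (fun i' => Af n c k i i' ≠ 0)).card ≤ 16 := by
    intro k hk1 hk2 i
    rcases Nat.eq_or_lt_of_le hk1 with h1 | h1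
    · -- k = 1
      have : Wf n (k-1) = 1 := by rw [← h1]; simp [Wf]
      rw [this]
      exact le_trans (Finset.card_filter_le _ _) (by simp)
    · -- k ≥ 2
      have hkm : ¬ (k - 1 = 0) := by omega
      set a := srcA n (k-1) (i/8) (i % 8 / 2) with ha
      set d := (i/8)/2 with hd
      have hsub : (Finset.range (Wf n (k-1))).filter (fun i' => Af n c k i i' ≠ 0)
          ⊆ Finset.Ico (8*a) (8*a+8) ∪ Finset.Ico (8*d) (8*d+8) := by
        intro i' hi'
        simp only [Finset.mem_filter] at hi'
        by_contra hmem
        simp only [Finset.mem_union, Finset.mem_Ico, not_or, not_and, not_lt, not_le] at hmem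
        apply hi'.2
        have hr : rcf (k-1) a i' = 0 := by
          have : ¬ (i' / 8 = a) := by omega
          simp [rcf, hkm, this]
        have hg : gC n (k-1) (i/8) (i % 8 / 2) i' = 0 := by
          have : ¬ (i' / 8 = d) := by omega
          simp only [gC]
          split_ifs with h
          · simp [rcf, hkm, ← hd, this]
          · rfl
        simp only [Af, if_neg (show ¬ k = 0 by omega), if_pos hk2, ← ha, hr, hg]
        ring
      calc _ ≤ (Finset.Ico (8*a) (8*a+8) ∪ Finset.Ico (8*d) (8*d+8)).card :=
            Finset.card_le_card hsub
        _ ≤ (Finset.Ico (8*a) (8*a+8)).card + (Finset.Ico (8*d) (8*d+8)).card :=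
            Finset.card_union_le _ _
        _ ≤ 16 := by simp [Nat.card_Ico]
  -- nonzeroWeights bound
  have hnzw : Net.nonzeroWeights (netf n c) ≤ 561 * n := by
    have h0 : Net.nonzeroWeights (netf n c)
        = ∑ k ∈ Finset.Icc 1 (Hn n + 1),
            ((((Finset.range (Wf n k)) ×ˢ (Finset.range (Wf n (k-1)))).filter
                (fun p => Af n c k p.1 p.2 ≠ 0)).card
              + ((Finset.range (Wf n k)).filter (fun i => bf n c k i ≠ 0)).card) := rfl
    rw [h0, Finset.sum_Icc_succ_top (by omega : 1 ≤ Hn n + 1)]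
    have hIccIco : Finset.Icc 1 (Hn n) = Finset.Ico 1 (Hn n + 1) := rfl
    have hhid : ∑ k ∈ Finset.Icc 1 (Hn n),
        ((((Finset.range (Wf n k)) ×ˢ (Finset.range (Wf n (k-1)))).filter
            (fun p => Af n c k p.1 p.2 ≠ 0)).card
          + ((Finset.range (Wf n k)).filter (fun i => bf n c k i ≠ 0)).card)
        ≤ ∑ k ∈ Finset.Icc 1 (Hn n), 17 * Wf n k := by
      apply Finset.sum_le_sum
      intro k hk
      simp only [Finset.mem_Icc] at hk
      have hA : (((Finset.range (Wf n k)) ×ˢ (Finset.range (Wf n (k-1)))).filter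
          (fun p => Af n c k p.1 p.2 ≠ 0)).card ≤ Wf n k * 16 :=
        filter_prod_card_le _ _ _ _ (hrow k hk.1 hk.2)
      have hb : ((Finset.range (Wf n k)).filter (fun i => bf n c k i ≠ 0)).card ≤ Wf n k :=
        le_trans (Finset.card_filter_le _ _) (by simp)
      omega
    have htop : (((Finset.range (Wf n (Hn n + 1))) ×ˢ (Finset.range (Wf n (Hn n + 1 - 1)))).filter
          (fun p => Af n c (Hn n + 1) p.1 p.2 ≠ 0)).card
        + ((Finset.range (Wf n (Hn n + 1))).filter (fun i => bf n c (Hn n + 1) i ≠ 0)).card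
        ≤ 8 * (n + 1) + 1 := by
      have e1 : Hn n + 1 - 1 = Hn n := rfl
      have hA : (((Finset.range (Wf n (Hn n + 1))) ×ˢ (Finset.range (Wf n (Hn n + 1 - 1)))).filter
          (fun p => Af n c (Hn n + 1) p.1 p.2 ≠ 0)).card ≤ Wf n (Hn n + 1) * Wf n (Hn n) := by
        apply filter_prod_card_le
        intro i
        rw [e1]
        exact le_trans (Finset.card_filter_le _ _) (by simp)
      have hb : ((Finset.range (Wf n (Hn n + 1))).filter (fun i => bf n c (Hn n + 1) i ≠ 0)).card
          ≤ Wf n (Hn n + 1) := le_trans (Finset.card_filter_le _ _) (by simp)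
      have hW1 : Wf n (Hn n + 1) = 1 := by
        simp only [Wf, if_neg (show ¬ Hn n + 1 = 0 by omega), if_neg (show ¬ Hn n + 1 ≤ Hn n by omega)]
      have hp : Wf n (Hn n + 1) * Wf n (Hn n) = Wf n (Hn n) := by rw [hW1, one_mul]
      omega
    have h17 : ∑ k ∈ Finset.Icc 1 (Hn n), 17 * Wf n k = 17 * Net.neurons (netf n c) := by
      rw [← Finset.mul_sum]
      rfl
    have := hhid
    rw [h17] at this
    omega
  refine ⟨netf n c, ?_, ?_, ?_, ?_, ?_, ?_, ?_⟩
  · show 1 ≤ Hn n + 1; omega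
  · show Wf n 0 = 1; simp [Wf]
  · show Wf n (Hn n + 1) = 1
    simp only [Wf, if_neg (show ¬ Hn n + 1 = 0 by omega), if_neg (show ¬ Hn n + 1 ≤ Hn n by omega)]
  · show (Hn n + 1) - 1 ≤ Nat.log 2 n + 1
    simp [Hn]
  · calc Net.neurons (netf n c) ≤ 32 * n := hneur
      _ ≤ 1000 * n := by omega
  · calc Net.nonzeroWeights (netf n c) ≤ 561 * n := hnzw
      _ ≤ 1000 * n := by omega
  · intro x
    have hL1 : (netf n c).L - 1 = Hn n := rfl
    show (∑ i' ∈ Finset.range ((netf n c).width ((netf n c).L - 1)),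
        (netf n c).A (netf n c).L 0 i' * Net.fwd (repu 2) (netf n c) (fun _ => x) ((netf n c).L - 1) i')
        + (netf n c).b (netf n c).L 0 = _
    have hWnet : (netf n c).width = Wf n := rfl
    have hAnet : (netf n c).A = Af n c := rfl
    have hbnet : (netf n c).b = bf n c := rfl
    have hLnet : (netf n c).L = Hn n + 1 := rfl
    rw [hL1, hWnet, hAnet, hbnet, hLnet]
    have hAtop : ∀ i', Af n c (Hn n + 1) 0 i' = ∑ j ∈ Finset.range (n+1), c j * rcf (Hn n) j i' := by
      intro i'
      simp only [Af, if_neg (show ¬ Hn n + 1 = 0 by omega), if_neg (show ¬ Hn n + 1 ≤ Hn n by omega)]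
    have hbtop : bf n c (Hn n + 1) 0 = ∑ j ∈ Finset.range (n+1), c j * rcc (Hn n) j := by
      simp only [bf, if_neg (show ¬ Hn n + 1 = 0 by omega), if_neg (show ¬ Hn n + 1 ≤ Hn n by omega)]
    rw [hbtop, Finset.sum_congr rfl (fun i' _ => by rw [hAtop i'])]
    set fw := Net.fwd (repu 2) (netf n c) (fun _ => x) with hfwdef
    have swap : ∑ i' ∈ Finset.range (Wf n (Hn n)),
        (∑ j ∈ Finset.range (n+1), c j * rcf (Hn n) j i') * fw (Hn n) i'
        = ∑ j ∈ Finset.range (n+1),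
            c j * (∑ i' ∈ Finset.range (Wf n (Hn n)), rcf (Hn n) j i' * fw (Hn n) i') := by
      simp only [Finset.sum_mul]
      rw [Finset.sum_comm]
      apply Finset.sum_congr rfl
      intro j _
      rw [Finset.mul_sum]
      apply Finset.sum_congr rfl
      intro i' _
      ring
    rw [swap, ← Finset.sum_add_distrib]
    apply Finset.sum_congr rfl
    intro j hj
    simp only [Finset.mem_range] at hj
    have hinv := inv n hn c x (Hn n) (le_refl _) j (by rw [hmfH]; omega)
    rw [← hfwdef] at hinv
    linear_combination c j * hinv
end
end

section
/- There exists a constant C > 0 such that for every integer d ≥ 1, every integer n ≥ 1, and every real polynomial p in d variables of total degree at most n, there exists a σ₂-network Φ with input dimension d, output dimension 1, at most d·⌊log₂ n⌋ + d hidden layers, at most C·binom(n+d, d) neurons, and at most C·binom(n+d, d) nonzero weights, whose realization satisfies R(Φ)(x) = p(x) for all x ∈ ℝ^d. -/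
open scoped Classical

noncomputable section

namespace Stmt6


variable {d : ℕ}

/-- total degree of a multi-index -/
def deg (α : Fin d →₀ ℕ) : ℕ := ∑ j, α j

lemma deg_eq_sum (α : Fin d →₀ ℕ) : deg α = α.sum fun _ e => e := by
  rw [Finsupp.sum, deg]
  exact (Finset.sum_subset (Finset.subset_univ _) (fun x _ h => by
    simpa using Finsupp.notMem_support_iff.mp h)).symm

/-- value of monomial -/
def mval (α : Fin d →₀ ℕ) (x : ℕ → ℝ) : ℝ := ∏ j : Fin d, x (j : ℕ) ^ α j

/-- all multi-indices of degree ≤ n -/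
def Mono (d n : ℕ) : Finset (Fin d →₀ ℕ) :=
  ((Finset.univ : Finset (Fin d → Fin (n+1))).image
    (fun f => Finsupp.equivFunOnFinite.symm (fun j => ((f j : ℕ))))).filter
    (fun α => deg α ≤ n)

lemma mem_Mono {n : ℕ} (α : Fin d →₀ ℕ) : α ∈ Mono d n ↔ deg α ≤ n := by
  constructor
  · intro h; exact (Finset.mem_filter.mp h).2
  · intro h
    refine Finset.mem_filter.mpr ⟨Finset.mem_image.mpr ?_, h⟩
    have hb : ∀ j, α j ≤ n := fun j =>
      le_trans (Finset.single_le_sum (f := fun j => α j) (fun _ _ => Nat.zero_le _)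
        (Finset.mem_univ j)) h
    refine ⟨fun j => ⟨α j, Nat.lt_succ_of_le (hb j)⟩, Finset.mem_univ _, ?_⟩
    apply Finsupp.equivFunOnFinite.symm_apply_eq.mpr
    ext j; simp [Finsupp.equivFunOnFinite]



def symOf (n : ℕ) (α : Fin d →₀ ℕ) (h : deg α ≤ n) : Sym (Fin (d+1)) n :=
  ⟨(∑ j : Fin d, Multiset.replicate (α j) (Fin.castSucc j)) +
      Multiset.replicate (n - deg α) (Fin.last d), by
    simp only [Multiset.card_add, map_sum Multiset.card, Multiset.card_replicate]
    simpa [deg] using Nat.add_sub_cancel' h⟩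

lemma count_symOf (n : ℕ) (α : Fin d →₀ ℕ) (h : deg α ≤ n) (j : Fin d) :
    Multiset.count (Fin.castSucc j) (symOf n α h : Multiset (Fin (d+1))) = α j := by
  have hcoe : (symOf n α h : Multiset (Fin (d+1))) =
      (∑ j : Fin d, Multiset.replicate (α j) (Fin.castSucc j)) +
        Multiset.replicate (n - deg α) (Fin.last d) := rfl
  rw [hcoe]
  simp only [Multiset.count_add, Multiset.count_sum', Multiset.count_replicate]
  have h2 : ∀ j' : Fin d, (Fin.castSucc j' = Fin.castSucc j) ↔ j' = j := by
    intro j'; exact Fin.castSucc_inj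
  have hlast : ¬ (Fin.last d = Fin.castSucc j) := by
    intro hh; exact absurd (hh ▸ Fin.castSucc_lt_last j) (lt_irrefl _)
  simp only [h2, hlast, if_false, add_zero]
  rw [Finset.sum_ite_eq' Finset.univ j (fun j' => α j')]
  simp

lemma card_Mono_le (n : ℕ) : (Mono d n).card ≤ (n + d).choose d := by
  classical
  have key : (Mono d n).card ≤ (Finset.univ : Finset (Sym (Fin (d+1)) n)).card := by
    apply Finset.card_le_card_of_injOn
      (fun α => if h : deg α ≤ n then symOf n α h else default)
    · intro α _; exact Finset.mem_univ _
    · intro α hα β hβ hEq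
      have hα' := (mem_Mono α).mp ((Finset.mem_coe).mp hα)
      have hβ' := (mem_Mono β).mp ((Finset.mem_coe).mp hβ)
      simp only [hα', hβ', dif_pos] at hEq
      ext j
      have := congrArg (fun s : Sym (Fin (d+1)) n =>
        Multiset.count (Fin.castSucc j) (s : Multiset (Fin (d+1)))) hEq
      simpa [count_symOf n α hα' j, count_symOf n β hβ' j] using this
  rw [Finset.card_univ, Sym.card_sym_eq_choose] at key
  have he : (Fintype.card (Fin (d+1)) + n - 1).choose n = (n + d).choose d := by
    rw [Fintype.card_fin, show d + 1 + n - 1 = n + d by omega]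
    have h1 : (n+d).choose d = (n+d).choose (n+d-d) := (Nat.choose_symm (Nat.le_add_left d n)).symm
    rw [h1, show n + d - d = n by omega]
  rwa [he] at key


/-- n ≤ (n+d).choose (d+1) for n ≥ 1 -/
lemma choose_aux (n : ℕ) (hn : 1 ≤ n) : ∀ d : ℕ, n ≤ (n + d).choose (d + 1)
  | 0 => by simpa using le_of_eq (Nat.choose_one_right n).symm
  | d + 1 => by
      show n ≤ (n + (d+1)).choose (d+2)
      have h1 := choose_aux n hn d
      have h2 : (n + (d+1)).choose (d+2) = (n+d).choose (d+1) + (n+d).choose (d+2) := by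
        rw [show n + (d+1) = (n+d) + 1 by ring]
        rfl
      omega

lemma choose_ge (n : ℕ) (hn : 1 ≤ n) : ∀ d : ℕ, 1 ≤ d → n * d + 1 ≤ (n + d).choose d
  | 0 => by omega
  | 1 => fun _ => by
      show n * 1 + 1 ≤ (n+1).choose 1
      simp [Nat.choose_one_right]
  | d + 2 => fun _ => by
      show n * (d+2) + 1 ≤ (n + (d+2)).choose (d+2)
      have h1 := choose_ge n hn (d+1) (by omega)
      have h2 : n ≤ (n+(d+1)).choose (d+2) := choose_aux n hn (d+1)
      have h3 : (n + (d+2)).choose (d+2) = (n+(d+1)).choose (d+1) + (n+(d+1)).choose (d+2) := by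
        rw [show n + (d+2) = (n+(d+1)) + 1 by ring]
        rfl
      have h4 : n * (d+2) = n * (d+1) + n := by ring
      omega

lemma clog_le_log_succ (n : ℕ) (hn : 1 ≤ n) : Nat.clog 2 n ≤ Nat.log 2 n + 1 := by
  rw [Nat.clog_le_iff_le_pow (by norm_num)]
  exact le_of_lt (Nat.lt_pow_succ_log_self (by norm_num) n)

lemma clog_le_self (n : ℕ) : Nat.clog 2 n ≤ n := by
  rw [Nat.clog_le_iff_le_pow (by norm_num)]
  exact le_of_lt (Nat.lt_two_pow_self (n := n))

/-- cumulative sums -/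
def cum (α : Fin d →₀ ℕ) (k : ℕ) : ℕ := ∑ j ∈ Finset.univ.filter (fun j : Fin d => (j : ℕ) < k), α j

lemma cum_zero (α : Fin d →₀ ℕ) : cum α 0 = 0 := by simp [cum]

lemma cum_d (α : Fin d →₀ ℕ) : cum α d = deg α := by
  unfold cum deg
  congr 1
  apply Finset.filter_true_of_mem
  intro j _; exact j.isLt

lemma cum_succ (α : Fin d →₀ ℕ) (j : Fin d) : cum α ((j : ℕ) + 1) = cum α (j : ℕ) + α j := by
  unfold cum
  have : Finset.univ.filter (fun j' : Fin d => (j' : ℕ) < (j : ℕ) + 1) =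
      insert j (Finset.univ.filter (fun j' : Fin d => (j' : ℕ) < (j : ℕ))) := by
    ext j'
    simp only [Finset.mem_filter, Finset.mem_univ, true_and, Finset.mem_insert]
    constructor
    · intro h
      rcases Nat.lt_succ_iff_lt_or_eq.mp h with h | h
      · exact Or.inr (by simpa using h)
      · exact Or.inl (Fin.ext h)
    · rintro (rfl | h); · omega
      · simp at h ⊢; omega
  rw [this, Finset.sum_insert (by simp)]
  ring

lemma cum_mono (α : Fin d →₀ ℕ) : Monotone (cum α) := by
  intro a b hab
  unfold cum
  apply Finset.sum_le_sum_of_subset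
  intro j; simp only [Finset.mem_filter, Finset.mem_univ, true_and]; omega

/-- the "larger half" function -/
def halfF (α : Fin d →₀ ℕ) : Fin d → ℕ := fun j =>
  min (deg α - deg α / 2) (cum α ((j : ℕ) + 1)) - min (deg α - deg α / 2) (cum α (j : ℕ))

def half (α : Fin d →₀ ℕ) : Fin d →₀ ℕ := Finsupp.equivFunOnFinite.symm (halfF α)

def other (α : Fin d →₀ ℕ) : Fin d →₀ ℕ :=
  Finsupp.equivFunOnFinite.symm (fun j => α j - halfF α j)

@[simp] lemma half_apply (α : Fin d →₀ ℕ) (j : Fin d) : half α j = halfF α j := rfl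
@[simp] lemma other_apply (α : Fin d →₀ ℕ) (j : Fin d) : other α j = α j - halfF α j := rfl

lemma halfF_le (α : Fin d →₀ ℕ) (j : Fin d) : halfF α j ≤ α j := by
  unfold halfF
  have h1 := cum_succ α j
  generalize deg α - deg α / 2 = h
  omega

lemma half_add_other (α : Fin d →₀ ℕ) (j : Fin d) : half α j + other α j = α j := by
  have := halfF_le α j
  simp; omega

/-- telescoping for monotone ℕ-valued functions -/
lemma sum_range_sub_of_mono (f : ℕ → ℕ) (hf : Monotone f) (m : ℕ) :
    ∑ k ∈ Finset.range m, (f (k+1) - f k) = f m - f 0 := by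
  induction m with
  | zero => simp
  | succ m ih =>
      rw [Finset.sum_range_succ, ih]
      have h1 : f 0 ≤ f m := hf (by omega)
      have h2 : f m ≤ f (m+1) := hf (by omega)
      omega

lemma deg_half (α : Fin d →₀ ℕ) : deg (half α) = deg α - deg α / 2 := by
  classical
  set h := deg α - deg α / 2 with hh
  have hmono : Monotone (fun k => min h (cum α k)) := fun a b hab =>
    min_le_min (le_refl h) (cum_mono α hab)
  have hstep : ∀ j : Fin d, half α j =
      (fun k => min h (cum α k)) ((j:ℕ)+1) - (fun k => min h (cum α k)) (j:ℕ) := fun j => rfl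
  have : deg (half α) = ∑ k ∈ Finset.range d,
      ((fun k => min h (cum α k)) (k+1) - (fun k => min h (cum α k)) k) := by
    unfold deg
    rw [Finset.sum_congr rfl (fun j _ => hstep j)]
    exact Fin.sum_univ_eq_sum_range (fun k => min h (cum α (k+1)) - min h (cum α k)) d
  rw [this, sum_range_sub_of_mono _ hmono, cum_zero, cum_d]
  have hle : h ≤ deg α := by omega
  simp [min_eq_left hle]



lemma deg_split (α : Fin d →₀ ℕ) : deg (half α) + deg (other α) = deg α := by
  unfold deg
  rw [← Finset.sum_add_distrib]
  exact Finset.sum_congr rfl (fun j _ => half_add_other α j)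

lemma deg_other (α : Fin d →₀ ℕ) : deg (other α) = deg α / 2 := by
  have h1 := deg_split α
  have h2 := deg_half α
  have : deg α / 2 ≤ deg α := Nat.div_le_self _ _
  omega

lemma mval_split (α : Fin d →₀ ℕ) (x : ℕ → ℝ) :
    mval α x = mval (half α) x * mval (other α) x := by
  unfold mval
  rw [← Finset.prod_mul_distrib]
  refine Finset.prod_congr rfl (fun j _ => ?_)
  rw [← pow_add, half_add_other]

/-- index of the variable of a degree-one multi-index -/
def pick (α : Fin d →₀ ℕ) : ℕ :=
  if h : α.support.Nonempty then ((α.support.min' h : Fin d) : ℕ) else 0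

lemma deg_one_single (α : Fin d →₀ ℕ) (h : deg α = 1) :
    ∃ j₀ : Fin d, (j₀ : ℕ) = pick α ∧ α j₀ = 1 ∧ ∀ j : Fin d, j ≠ j₀ → α j = 0 := by
  have hne : α.support.Nonempty := by
    by_contra hc
    rw [Finset.not_nonempty_iff_eq_empty] at hc
    have : α = 0 := by ext j; simpa using Finsupp.notMem_support_iff.mp (by simp [hc])
    rw [this] at h; simp [deg] at h
  refine ⟨α.support.min' hne, by simp [pick, hne], ?_, ?_⟩
  · have hmem := α.support.min'_mem hne
    have h1 : 1 ≤ α (α.support.min' hne) := Nat.one_le_iff_ne_zero.mpr (Finsupp.mem_support_iff.mp hmem)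
    have h2 : α (α.support.min' hne) ≤ deg α :=
      Finset.single_le_sum (f := fun j => α j) (fun _ _ => Nat.zero_le _) (Finset.mem_univ _)
    omega
  · intro j hj
    by_contra hc
    have h1 : 1 ≤ α j := Nat.one_le_iff_ne_zero.mpr hc
    have hmem := α.support.min'_mem hne
    have h2 : 1 ≤ α (α.support.min' hne) :=
      Nat.one_le_iff_ne_zero.mpr (Finsupp.mem_support_iff.mp hmem)
    have : α j + α (α.support.min' hne) ≤ deg α := by
      rw [deg, ← Finset.sum_pair hj]
      exact Finset.sum_le_sum_of_subset (by intro u hu; exact Finset.mem_univ u)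
    omega

lemma pick_lt (α : Fin d →₀ ℕ) (h : deg α = 1) : pick α < d := by
  obtain ⟨j₀, hj₀, _, _⟩ := deg_one_single α h
  rw [← hj₀]; exact j₀.isLt

lemma mval_deg_one (α : Fin d →₀ ℕ) (h : deg α = 1) (x : ℕ → ℝ) :
    mval α x = x (pick α) := by
  obtain ⟨j₀, hj₀, h1, h0⟩ := deg_one_single α h
  unfold mval
  rw [Finset.prod_eq_single j₀ (fun j _ hj => by rw [h0 j hj]; simp) (by simp)]
  rw [h1, hj₀]; simp

/-- scheduling bounds for the two halves -/
lemma sched (e : ℕ) (he : 2 ≤ e) (f : ℕ) (hf : f = e - e / 2 ∨ f = e / 2) :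
    1 ≤ f ∧ Nat.clog 2 f ≤ Nat.clog 2 e - 1 ∧ Nat.clog 2 e - 2 ≤ Nat.clog 2 f := by
  set s := Nat.clog 2 e with hs
  have hs1 : 1 ≤ s := Nat.clog_pos (by norm_num) he
  have hu : e ≤ 2 ^ s := Nat.le_pow_clog (by norm_num) e
  have hl : 2 ^ (s - 1) < e := by
    have := Nat.pow_pred_clog_lt_self (b := 2) (by norm_num) (x := e) (by omega)
    simpa [Nat.pred_eq_sub_one] using this
  have hp : 2 ^ s = 2 * 2 ^ (s - 1) := by
    conv_lhs => rw [show s = (s - 1) + 1 by omega]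
    rw [pow_succ]; ring
  have hf1 : 1 ≤ f := by omega
  refine ⟨hf1, ?_, ?_⟩
  · rw [Nat.clog_le_iff_le_pow (by norm_num)]
    omega
  · by_cases hs2 : s ≤ 2
    · omega
    · have h3 : 3 ≤ s := by omega
      have : s - 3 < Nat.clog 2 f := by
        rw [Nat.lt_clog_iff_pow_lt (by norm_num)]
        have hp2 : 2 ^ (s - 1) = 4 * 2 ^ (s - 3) := by
          conv_lhs => rw [show s - 1 = (s - 3) + 2 by omega]
          rw [pow_add]; ring
        have hq : 1 ≤ 2 ^ (s - 3) := Nat.one_le_two_pow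
        omega
      omega

end Stmt6

namespace Stmt6

/-! ## The network construction -/

abbrev Aff : Type := (ℕ → ℝ) × ℝ

def konst (r : ℝ) : Aff := (fun _ => 0, r)
def ind (a : ℕ) : ℕ → ℝ := fun j => if j = a then 1 else 0
def uRead (q : ℕ) : Aff :=
  (fun j => (ind (4*q) j + ind (4*q+1) j - ind (4*q+2) j - ind (4*q+3) j) / 4, 0)

def jdx (α : Fin d →₀ ℕ) : ℕ := Nat.clog 2 (deg α)
def M2 (d n : ℕ) : Finset (Fin d →₀ ℕ) := (Mono d n).filter (fun α => 2 ≤ deg α)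
def DD (d n : ℕ) (s : ℕ) : Finset (Fin d →₀ ℕ) := (M2 d n).filter (fun α => jdx α = s)
def lst (d n s : ℕ) : List (Fin d →₀ ℕ) := (DD d n s).toList
def idx (d n s : ℕ) (α : Fin d →₀ ℕ) : ℕ := (lst d n s).idxOf α
def gt (d n s i : ℕ) : Fin d →₀ ℕ := (lst d n s).getD i 0
def nU (d n s : ℕ) : ℕ := d + 1 + (DD d n s).card + (DD d n (s-1)).card
def JJ (n : ℕ) : ℕ := Nat.clog 2 n

def readX (s j : ℕ) : Aff := if s = 0 then (ind j, 0) else uRead j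
def readAcc (d s : ℕ) : Aff := if s = 0 then (fun _ => 0, 0) else uRead d
def readM (d n s : ℕ) (α : Fin d →₀ ℕ) : Aff :=
  if jdx α = s then uRead (d + 1 + idx d n s α)
  else uRead (d + 1 + (DD d n s).card + idx d n (s-1) α)
def readH (d n s : ℕ) (α : Fin d →₀ ℕ) : Aff :=
  if deg α = 1 then readX s (pick α) else readM d n s α

variable (c : (Fin d →₀ ℕ) → ℝ)

def accIn (d n : ℕ) (c : (Fin d →₀ ℕ) → ℝ) (s : ℕ) : Aff :=
  readAcc d (s-1) + ∑ α ∈ DD d n (s-1), c α • readM d n (s-1) α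

def unit (d n : ℕ) (c : (Fin d →₀ ℕ) → ℝ) (s q : ℕ) : Aff × Aff :=
  if q < d then (readX (s-1) q, konst 1)
  else if q = d then (accIn d n c s, konst 1)
  else if q < d + 1 + (DD d n s).card then
    (readH d n (s-1) (half (gt d n s (q - (d+1)))),
     readH d n (s-1) (other (gt d n s (q - (d+1)))))
  else (readM d n (s-1) (gt d n (s-1) (q - (d+1) - (DD d n s).card)), konst 1)

def wd (d n k : ℕ) : ℕ := if k = 0 then d else if k ≤ JJ n then 4 * nU d n k else 1

def Fout (d n : ℕ) (c : (Fin d →₀ ℕ) → ℝ) : Aff :=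
  readAcc d (JJ n) + (∑ α ∈ DD d n (JJ n), c α • readM d n (JJ n) α)
    + (∑ α ∈ (Mono d n).filter (fun α => deg α = 1), c α • readX (JJ n) (pick α))
    + konst (∑ α ∈ (Mono d n).filter (fun α => deg α = 0), c α)

def sg1 (r : ℕ) : ℝ := if r = 0 ∨ r = 2 then 1 else -1
def sg2 (r : ℕ) : ℝ := if r = 0 ∨ r = 3 then 1 else -1

def net (d n : ℕ) (c : (Fin d →₀ ℕ) → ℝ) : Net where
  L := JJ n + 1
  width := wd d n
  A := fun k i j =>
    if k = JJ n + 1 then (if i = 0 then (Fout d n c).1 j else 0)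
    else sg1 (i % 4) * ((unit d n c k (i/4)).1.1 j)
        + sg2 (i % 4) * ((unit d n c k (i/4)).2.1 j)
  b := fun k i =>
    if k = JJ n + 1 then (if i = 0 then (Fout d n c).2 else 0)
    else sg1 (i % 4) * ((unit d n c k (i/4)).1.2)
        + sg2 (i % 4) * ((unit d n c k (i/4)).2.2)

/-! ## readout of an affine functional against a state -/

def appS (w : ℕ) (F : Aff) (v : ℕ → ℝ) : ℝ := (∑ j ∈ Finset.range w, F.1 j * v j) + F.2

lemma appS_add (w : ℕ) (F G : Aff) (v : ℕ → ℝ) :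
    appS w (F + G) v = appS w F v + appS w G v := by
  unfold appS
  simp only [Prod.fst_add, Prod.snd_add, Pi.add_apply, add_mul, Finset.sum_add_distrib]
  ring

lemma appS_smul (w : ℕ) (r : ℝ) (F : Aff) (v : ℕ → ℝ) :
    appS w (r • F) v = r * appS w F v := by
  unfold appS
  simp only [Prod.smul_fst, Prod.smul_snd, Pi.smul_apply, smul_eq_mul]
  rw [mul_add, Finset.mul_sum]
  congr 1
  exact Finset.sum_congr rfl (fun j _ => by ring)

lemma appS_konst (w : ℕ) (r : ℝ) (v : ℕ → ℝ) : appS w (konst r) v = r := by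
  simp [appS, konst]

lemma appS_sum {β : Type*} (w : ℕ) (s : Finset β) (F : β → Aff) (v : ℕ → ℝ) :
    appS w (∑ b ∈ s, F b) v = ∑ b ∈ s, appS w (F b) v := by
  classical
  induction s using Finset.induction with
  | empty => simp [appS]
  | insert a s hnotmem ih =>
      rw [Finset.sum_insert hnotmem, Finset.sum_insert hnotmem, appS_add, ih]

lemma sum_ind (w a : ℕ) (ha : a < w) (v : ℕ → ℝ) :
    ∑ j ∈ Finset.range w, ind a j * v j = v a := by
  unfold ind
  rw [Finset.sum_eq_single a]
  · simp
  · intro j _ hj; simp [hj]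
  · intro h; exact absurd (Finset.mem_range.mpr ha) h

lemma appS_uRead (w q : ℕ) (h : 4*q+3 < w) (v : ℕ → ℝ) :
    appS w (uRead q) v = (v (4*q) + v (4*q+1) - v (4*q+2) - v (4*q+3)) / 4 := by
  unfold appS uRead
  have e : ∀ j, (ind (4*q) j + ind (4*q+1) j - ind (4*q+2) j - ind (4*q+3) j) / 4 * v j
      = (ind (4*q) j * v j) / 4 + (ind (4*q+1) j * v j) / 4
        - (ind (4*q+2) j * v j) / 4 - (ind (4*q+3) j * v j) / 4 := by intro j; ring
  rw [Finset.sum_congr rfl (fun j _ => e j)]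
  simp only [Finset.sum_sub_distrib, Finset.sum_add_distrib, ← Finset.sum_div]
  rw [sum_ind w _ (by omega) v, sum_ind w _ (by omega) v, sum_ind w _ (by omega) v,
    sum_ind w _ h v]
  ring

/-- the square gadget -/
lemma repu_sq (t : ℝ) : repu 2 t + repu 2 (-t) = t^2 := by
  rcases le_total t 0 with h | h
  · rw [repu, repu, max_eq_left h, max_eq_right (by linarith)]
    ring
  · rw [repu, repu, max_eq_right h, max_eq_left (by linarith)]
    ring

/-- the product gadget -/
lemma repu_prod (u v : ℝ) :
    (repu 2 (u+v) + repu 2 (-(u+v)) - repu 2 (u-v) - repu 2 (-(u-v))) / 4 = u * v := by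
  have h1 := repu_sq (u+v)
  have h2 := repu_sq (u-v)
  have : repu 2 (u+v) + repu 2 (-(u+v)) - (repu 2 (u-v) + repu 2 (-(u-v)))
      = (u+v)^2 - (u-v)^2 := by rw [h1, h2]
  nlinarith [this]

end Stmt6
-- appended to main.lean after testing
namespace Stmt6

def stt (d n : ℕ) (c : (Fin d →₀ ℕ) → ℝ) (x : ℕ → ℝ) (s : ℕ) : ℕ → ℝ :=
  Net.fwd (repu 2) (net d n c) x s

lemma stt_zero (d n : ℕ) (c : (Fin d →₀ ℕ) → ℝ) (x : ℕ → ℝ) : stt d n c x 0 = x := rfl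

lemma stt_hidden (d n : ℕ) (c : (Fin d →₀ ℕ) → ℝ) (x : ℕ → ℝ) (s i : ℕ)
    (hs : s + 1 ≤ JJ n) :
    stt d n c x (s+1) i
      = repu 2 (sg1 (i % 4) * appS (wd d n s) (unit d n c (s+1) (i/4)).1 (stt d n c x s)
          + sg2 (i % 4) * appS (wd d n s) (unit d n c (s+1) (i/4)).2 (stt d n c x s)) := by
  have hne : ¬ (s + 1 = JJ n + 1) := by omega
  show repu 2 ((∑ j ∈ Finset.range ((net d n c).width s),
      (net d n c).A (s+1) i j * stt d n c x s j) + (net d n c).b (s+1) i) = _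
  have hA : ∀ j, (net d n c).A (s+1) i j
      = sg1 (i % 4) * ((unit d n c (s+1) (i/4)).1.1 j)
        + sg2 (i % 4) * ((unit d n c (s+1) (i/4)).2.1 j) := by
    intro j; simp only [net, hne, if_false]
  have hb : (net d n c).b (s+1) i
      = sg1 (i % 4) * ((unit d n c (s+1) (i/4)).1.2)
        + sg2 (i % 4) * ((unit d n c (s+1) (i/4)).2.2) := by
    simp only [net, hne, if_false]
  have hw : (net d n c).width s = wd d n s := rfl
  rw [hw, hb, Finset.sum_congr rfl (fun j _ => by rw [hA j])]
  congr 1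
  unfold appS
  simp only [add_mul, Finset.sum_add_distrib]
  rw [mul_add, mul_add, Finset.mul_sum, Finset.mul_sum]
  have r1 : ∑ j ∈ Finset.range (wd d n s),
      sg1 (i % 4) * (unit d n c (s + 1) (i / 4)).1.1 j * stt d n c x s j
      = ∑ j ∈ Finset.range (wd d n s),
        sg1 (i % 4) * ((unit d n c (s + 1) (i / 4)).1.1 j * stt d n c x s j) :=
    Finset.sum_congr rfl (fun j _ => by ring)
  have r2 : ∑ j ∈ Finset.range (wd d n s),
      sg2 (i % 4) * (unit d n c (s + 1) (i / 4)).2.1 j * stt d n c x s j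
      = ∑ j ∈ Finset.range (wd d n s),
        sg2 (i % 4) * ((unit d n c (s + 1) (i / 4)).2.1 j * stt d n c x s j) :=
    Finset.sum_congr rfl (fun j _ => by ring)
  rw [r1, r2]
  ring

lemma unit_val (d n : ℕ) (c : (Fin d →₀ ℕ) → ℝ) (x : ℕ → ℝ) (s q : ℕ)
    (hs : s + 1 ≤ JJ n) (hq : q < nU d n (s+1)) :
    appS (wd d n (s+1)) (uRead q) (stt d n c x (s+1))
      = appS (wd d n s) (unit d n c (s+1) q).1 (stt d n c x s)
        * appS (wd d n s) (unit d n c (s+1) q).2 (stt d n c x s) := by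
  have hw : wd d n (s+1) = 4 * nU d n (s+1) := by
    unfold wd; simp [Nat.succ_ne_zero, hs]
  rw [appS_uRead _ q (by omega) _]
  set u := appS (wd d n s) (unit d n c (s+1) q).1 (stt d n c x s) with hu
  set v := appS (wd d n s) (unit d n c (s+1) q).2 (stt d n c x s) with hv
  have e0 : stt d n c x (s+1) (4*q) = repu 2 (u + v) := by
    rw [stt_hidden d n c x s (4*q) hs]
    have h1 : (4*q) % 4 = 0 := by omega
    have h2 : (4*q) / 4 = q := by omega
    rw [h1, h2]; simp [sg1, sg2]; rfl
  have e1 : stt d n c x (s+1) (4*q+1) = repu 2 (-(u + v)) := by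
    rw [stt_hidden d n c x s (4*q+1) hs]
    have h1 : (4*q+1) % 4 = 1 := by omega
    have h2 : (4*q+1) / 4 = q := by omega
    rw [h1, h2]
    have : sg1 1 * u + sg2 1 * v = -(u+v) := by simp [sg1, sg2]; ring
    rw [this]
  have e2 : stt d n c x (s+1) (4*q+2) = repu 2 (u - v) := by
    rw [stt_hidden d n c x s (4*q+2) hs]
    have h1 : (4*q+2) % 4 = 2 := by omega
    have h2 : (4*q+2) / 4 = q := by omega
    rw [h1, h2]
    have : sg1 2 * u + sg2 2 * v = u - v := by simp [sg1, sg2]; ring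
    rw [this]
  have e3 : stt d n c x (s+1) (4*q+3) = repu 2 (-(u - v)) := by
    rw [stt_hidden d n c x s (4*q+3) hs]
    have h1 : (4*q+3) % 4 = 3 := by omega
    have h2 : (4*q+3) / 4 = q := by omega
    rw [h1, h2]
    have : sg1 3 * u + sg2 3 * v = -(u - v) := by simp [sg1, sg2]; ring
    rw [this]
  rw [e0, e1, e2, e3]
  exact repu_prod u v

end Stmt6
namespace Stmt6

lemma mem_M2 {d n : ℕ} {α : Fin d →₀ ℕ} :
    α ∈ M2 d n ↔ (deg α ≤ n ∧ 2 ≤ deg α) := by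
  unfold M2
  rw [Finset.mem_filter, mem_Mono]

lemma idx_lt {d n s : ℕ} {α : Fin d →₀ ℕ} (h : α ∈ DD d n s) :
    idx d n s α < (DD d n s).card := by
  have hmem : α ∈ lst d n s := Finset.mem_toList.mpr h
  have := List.idxOf_lt_length_iff.mpr hmem
  simpa [idx, lst, Finset.length_toList] using this

lemma gt_idx {d n s : ℕ} {α : Fin d →₀ ℕ} (h : α ∈ DD d n s) :
    gt d n s (idx d n s α) = α := by
  have hmem : α ∈ lst d n s := Finset.mem_toList.mpr h
  have hlt : (lst d n s).idxOf α < (lst d n s).length := List.idxOf_lt_length_iff.mpr hmem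
  unfold gt idx
  rw [List.getD_eq_getElem (hn := hlt)]
  exact List.idxOf_get hlt

lemma jdx_le_JJ {d n : ℕ} {α : Fin d →₀ ℕ} (h : α ∈ M2 d n) : jdx α ≤ JJ n :=
  Nat.clog_mono_right 2 (mem_M2.mp h).1

theorem main_inv (d n : ℕ) (c : (Fin d →₀ ℕ) → ℝ) (x : ℕ → ℝ) :
    ∀ s, s ≤ JJ n →
      ((∀ j, j < d → appS (wd d n s) (readX s j) (stt d n c x s) = x j) ∧
       (appS (wd d n s) (readAcc d s) (stt d n c x s)
          = ∑ α ∈ (M2 d n).filter (fun α => jdx α < s), c α * mval α x) ∧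
       (∀ α, α ∈ M2 d n → (jdx α = s ∨ jdx α + 1 = s) →
          appS (wd d n s) (readM d n s α) (stt d n c x s) = mval α x)) := by
  intro s
  induction s with
  | zero =>
      intro _
      refine ⟨?_, ?_, ?_⟩
      · intro j hj
        have : readX 0 j = (ind j, 0) := by simp [readX]
        rw [this]
        show (∑ j' ∈ Finset.range (wd d n 0), ind j j' * stt d n c x 0 j') + 0 = x j
        have hw : wd d n 0 = d := by simp [wd]
        rw [hw, add_zero, stt_zero, sum_ind d j hj x]
      · have : readAcc d 0 = ((fun _ => 0), 0) := by simp [readAcc]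
        rw [this]
        have hfe : (M2 d n).filter (fun α => jdx α < 0) = ∅ := by
          apply Finset.filter_false_of_mem; intro α _; omega
        rw [hfe]
        simp [appS]
      · intro α hα hcase
        exfalso
        have h2 : 2 ≤ deg α := (mem_M2.mp hα).2
        have := Nat.clog_pos (b := 2) (by norm_num) h2
        unfold jdx at hcase
        omega
  | succ s ih =>
      intro hs
      obtain ⟨ih1, ih2, ih3⟩ := ih (by omega)
      have hnu : d + 1 + (DD d n (s+1)).card + (DD d n s).card = nU d n (s+1) := by
        simp [nU]
      -- helper : read a "half" monomial at layer s
      have hread : ∀ β : Fin d →₀ ℕ, deg β ≤ n → 1 ≤ deg β →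
          Nat.clog 2 (deg β) ≤ s → s ≤ Nat.clog 2 (deg β) + 1 →
          appS (wd d n s) (readH d n s β) (stt d n c x s) = mval β x := by
        intro β h1 h2 h3 h4
        by_cases hβ1 : deg β = 1
        · rw [readH, if_pos hβ1, ih1 (pick β) (pick_lt β hβ1), mval_deg_one β hβ1 x]
        · have hβ2 : 2 ≤ deg β := by omega
          have hβM2 : β ∈ M2 d n := mem_M2.mpr ⟨h1, hβ2⟩
          have hj1 : 1 ≤ Nat.clog 2 (deg β) := Nat.clog_pos (by norm_num) hβ2
          rw [readH, if_neg hβ1]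
          exact ih3 β hβM2 (by unfold jdx; omega)
      refine ⟨?_, ?_, ?_⟩
      · -- inputs
        intro j hj
        have hrx : readX (s+1) j = uRead j := by simp [readX]
        rw [hrx, unit_val d n c x s j hs (by omega)]
        have hdec : unit d n c (s+1) j = (readX s j, konst 1) := by
          unfold unit
          rw [if_pos hj]
          simp
        rw [hdec]
        show appS (wd d n s) (readX s j) _ * appS (wd d n s) (konst 1) _ = x j
        rw [ih1 j hj, appS_konst]
        ring
      · -- accumulator
        have hra : readAcc d (s+1) = uRead d := by simp [readAcc]
        rw [hra, unit_val d n c x s d hs (by omega)]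
        have hdec : unit d n c (s+1) d = (accIn d n c (s+1), konst 1) := by
          unfold unit
          rw [if_neg (by omega), if_pos rfl]
        rw [hdec]
        show appS (wd d n s) (accIn d n c (s+1)) _ * appS (wd d n s) (konst 1) _ = _
        rw [appS_konst, mul_one]
        have haccIn : accIn d n c (s+1)
            = readAcc d s + ∑ α ∈ DD d n s, c α • readM d n s α := by
          unfold accIn
          simp
        rw [haccIn, appS_add, appS_sum, ih2]
        have hterm : ∀ α ∈ DD d n s,
            appS (wd d n s) (c α • readM d n s α) (stt d n c x s) = c α * mval α x := by
          intro α hα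
          rw [appS_smul]
          congr 1
          exact ih3 α (Finset.mem_of_mem_filter α hα)
            (Or.inl ((Finset.mem_filter.mp hα).2))
        rw [Finset.sum_congr rfl hterm]
        -- now the filter identity
        have e1 : ((M2 d n).filter (fun α => jdx α < s+1)).filter (fun α => jdx α < s)
            = (M2 d n).filter (fun α => jdx α < s) := by
          rw [Finset.filter_filter]
          exact Finset.filter_congr (fun α _ => by
            constructor
            · exact fun h => h.2
            · exact fun h => ⟨by omega, h⟩)
        have e2 : ((M2 d n).filter (fun α => jdx α < s+1)).filter (fun α => ¬ jdx α < s)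
            = DD d n s := by
          rw [Finset.filter_filter]
          unfold DD
          exact Finset.filter_congr (fun α _ => by
            constructor
            · exact fun h => by omega
            · exact fun h => by omega)
        conv_rhs => rw [← Finset.sum_filter_add_sum_filter_not
          ((M2 d n).filter (fun α => jdx α < s+1)) (fun α => jdx α < s), e1, e2]
      · -- monomials
        intro α hαM2 hcase
        rcases hcase with hcr | hca
        · -- creation : jdx α = s + 1
          have hαD : α ∈ DD d n (s+1) := Finset.mem_filter.mpr ⟨hαM2, hcr⟩
          have hi : idx d n (s+1) α < (DD d n (s+1)).card := idx_lt hαD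
          have hrm : readM d n (s+1) α = uRead (d + 1 + idx d n (s+1) α) := by
            unfold readM
            rw [if_pos hcr]
          rw [hrm, unit_val d n c x s _ hs (by omega)]
          have hdec : unit d n c (s+1) (d + 1 + idx d n (s+1) α)
              = (readH d n s (half α), readH d n s (other α)) := by
            unfold unit
            rw [if_neg (by omega), if_neg (by omega), if_pos (by omega)]
            have harg : d + 1 + idx d n (s+1) α - (d+1) = idx d n (s+1) α := by omega
            rw [harg]
            have hgt : gt d n (s+1) (idx d n (s+1) α) = α := gt_idx hαD
            rw [hgt]
            simp
          rw [hdec]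
          have he2 : 2 ≤ deg α := (mem_M2.mp hαM2).2
          have hen : deg α ≤ n := (mem_M2.mp hαM2).1
          have hsc1 := sched (deg α) he2 (deg (half α)) (Or.inl (deg_half α))
          have hsc2 := sched (deg α) he2 (deg (other α)) (Or.inr (deg_other α))
          have hje : Nat.clog 2 (deg α) = s + 1 := hcr
          show appS (wd d n s) (readH d n s (half α)) _
              * appS (wd d n s) (readH d n s (other α)) _ = mval α x
          rw [hread (half α) (by rw [deg_half]; omega) hsc1.1 (by omega) (by omega),
            hread (other α) (by rw [deg_other]; exact le_trans (Nat.div_le_self _ _) hen)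
              hsc2.1 (by omega) (by omega)]
          exact (mval_split α x).symm
        · -- carry : jdx α = s
          have hjs : jdx α = s := by omega
          have hαD : α ∈ DD d n s := Finset.mem_filter.mpr ⟨hαM2, hjs⟩
          have hi : idx d n s α < (DD d n s).card := idx_lt hαD
          have hrm : readM d n (s+1) α
              = uRead (d + 1 + (DD d n (s+1)).card + idx d n s α) := by
            unfold readM
            rw [if_neg (by omega)]
            simp
          rw [hrm, unit_val d n c x s _ hs (by omega)]
          have hdec : unit d n c (s+1) (d + 1 + (DD d n (s+1)).card + idx d n s α)
              = (readM d n s α, konst 1) := by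
            unfold unit
            rw [if_neg (by omega), if_neg (by omega), if_neg (by omega)]
            have harg : d + 1 + (DD d n (s+1)).card + idx d n s α - (d+1)
                - (DD d n (s+1)).card = idx d n s α := by omega
            rw [harg]
            have hgt : gt d n s (idx d n s α) = α := gt_idx hαD
            simp [hgt]
          rw [hdec]
          show appS (wd d n s) (readM d n s α) _ * appS (wd d n s) (konst 1) _ = mval α x
          rw [ih3 α hαM2 (Or.inl hjs), appS_konst]
          ring

end Stmt6
namespace Stmt6

lemma mval_deg_zero {d : ℕ} (α : Fin d →₀ ℕ) (h : deg α = 0) (x : ℕ → ℝ) :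
    mval α x = 1 := by
  unfold mval
  apply Finset.prod_eq_one
  intro j _
  have : α j = 0 := by
    have := Finset.sum_eq_zero_iff.mp h j (Finset.mem_univ j)
    exact this
  rw [this, pow_zero]

lemma net_realize (d n : ℕ) (c : (Fin d →₀ ℕ) → ℝ) (x : ℕ → ℝ) :
    (net d n c).realize (repu 2) x 0
      = ∑ α ∈ Mono d n, c α * mval α x := by
  have hL : (net d n c).L = JJ n + 1 := rfl
  have hreal : (net d n c).realize (repu 2) x 0
      = appS (wd d n (JJ n)) (Fout d n c) (stt d n c x (JJ n)) := by
    unfold Net.realize appS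
    rw [hL]
    have h1 : JJ n + 1 - 1 = JJ n := by omega
    rw [h1]
    have hA : ∀ j, (net d n c).A (JJ n + 1) 0 j = (Fout d n c).1 j := by
      intro j; simp [net]
    have hb : (net d n c).b (JJ n + 1) 0 = (Fout d n c).2 := by simp [net]
    have hw : (net d n c).width (JJ n) = wd d n (JJ n) := rfl
    rw [hw, hb]
    congr 1
    exact Finset.sum_congr rfl (fun j _ => by rw [hA j]; rfl)
  rw [hreal]
  obtain ⟨i1, i2, i3⟩ := main_inv d n c x (JJ n) le_rfl
  unfold Fout
  rw [appS_add, appS_add, appS_add, appS_sum, appS_sum, appS_konst, i2]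
  have t1 : ∀ α ∈ DD d n (JJ n),
      appS (wd d n (JJ n)) (c α • readM d n (JJ n) α) (stt d n c x (JJ n))
        = c α * mval α x := by
    intro α hα
    rw [appS_smul]
    congr 1
    exact i3 α (Finset.mem_of_mem_filter α hα) (Or.inl (Finset.mem_filter.mp hα).2)
  have t2 : ∀ α ∈ (Mono d n).filter (fun α => deg α = 1),
      appS (wd d n (JJ n)) (c α • readX (JJ n) (pick α)) (stt d n c x (JJ n))
        = c α * mval α x := by
    intro α hα
    have h1 : deg α = 1 := (Finset.mem_filter.mp hα).2
    rw [appS_smul, i1 (pick α) (pick_lt α h1), mval_deg_one α h1 x]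
  rw [Finset.sum_congr rfl t1, Finset.sum_congr rfl t2]
  have t3 : ∑ α ∈ (Mono d n).filter (fun α => deg α = 0), c α
      = ∑ α ∈ (Mono d n).filter (fun α => deg α = 0), c α * mval α x := by
    apply Finset.sum_congr rfl
    intro α hα
    rw [mval_deg_zero α (Finset.mem_filter.mp hα).2 x, mul_one]
  rw [t3]
  -- now assemble the partition of Mono d n
  have hM2split : ∑ α ∈ M2 d n, c α * mval α x
      = (∑ α ∈ (M2 d n).filter (fun α => jdx α < JJ n), c α * mval α x)
        + ∑ α ∈ DD d n (JJ n), c α * mval α x := by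
    rw [← Finset.sum_filter_add_sum_filter_not (M2 d n) (fun α => jdx α < JJ n)]
    congr 1
    unfold DD
    apply Finset.sum_congr _ (fun _ _ => rfl)
    apply Finset.filter_congr
    intro α hα
    have := jdx_le_JJ (d := d) (n := n) (α := α) hα
    constructor
    · intro h; omega
    · intro h; omega
  have hMsplit : ∑ α ∈ Mono d n, c α * mval α x
      = (∑ α ∈ (Mono d n).filter (fun α => deg α = 0), c α * mval α x)
        + (∑ α ∈ (Mono d n).filter (fun α => deg α = 1), c α * mval α x)
        + ∑ α ∈ M2 d n, c α * mval α x := by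
    rw [← Finset.sum_filter_add_sum_filter_not (Mono d n) (fun α => deg α ≤ 1)]
    have e3 : (Mono d n).filter (fun α => ¬ deg α ≤ 1) = M2 d n := by
      unfold M2
      exact Finset.filter_congr (fun α _ => by omega)
    rw [e3]
    congr 1
    rw [← Finset.sum_filter_add_sum_filter_not
      ((Mono d n).filter (fun α => deg α ≤ 1)) (fun α => deg α = 0)]
    have e4 : ((Mono d n).filter (fun α => deg α ≤ 1)).filter (fun α => deg α = 0)
        = (Mono d n).filter (fun α => deg α = 0) := by
      rw [Finset.filter_filter]
      exact Finset.filter_congr (fun α _ => by omega)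
    have e5 : ((Mono d n).filter (fun α => deg α ≤ 1)).filter (fun α => ¬ deg α = 0)
        = (Mono d n).filter (fun α => deg α = 1) := by
      rw [Finset.filter_filter]
      exact Finset.filter_congr (fun α _ => by omega)
    rw [e4, e5]
  rw [hMsplit, hM2split]
  ring

end Stmt6
namespace Stmt6

/-! ## support bounds for weight counting -/

def suppU (q : ℕ) : Finset ℕ := {4*q, 4*q+1, 4*q+2, 4*q+3}

lemma card_suppU (q : ℕ) : (suppU q).card ≤ 4 := by
  have hsub : suppU q ⊆ Finset.Icc (4*q) (4*q+3) := by
    intro t ht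
    simp only [suppU, Finset.mem_insert, Finset.mem_singleton] at ht
    simp only [Finset.mem_Icc]
    omega
  refine le_trans (Finset.card_le_card hsub) ?_
  rw [Nat.card_Icc]
  omega

lemma uRead_supp (q t : ℕ) (h : (uRead q).1 t ≠ 0) : t ∈ suppU q := by
  by_contra hc
  apply h
  unfold uRead ind
  simp only [suppU, Finset.mem_insert, Finset.mem_singleton, not_or] at hc
  obtain ⟨h0, h1, h2, h3⟩ := hc
  simp [h0, h1, h2, h3]

def posM (d n s : ℕ) (α : Fin d →₀ ℕ) : ℕ :=
  if jdx α = s then d + 1 + idx d n s α else d + 1 + (DD d n s).card + idx d n (s-1) α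

lemma readM_eq (d n s : ℕ) (α : Fin d →₀ ℕ) : readM d n s α = uRead (posM d n s α) := by
  unfold readM posM
  split_ifs <;> rfl

lemma readX_supp (s j t : ℕ) (h : (readX s j).1 t ≠ 0) : t ∈ ({j} : Finset ℕ) ∪ suppU j := by
  unfold readX at h
  split_ifs at h with hs
  · simp only [ind] at h
    have : t = j := by by_contra hc; simp [hc] at h
    simp [this]
  · exact Finset.mem_union_right _ (uRead_supp j t h)

def sH (d n s : ℕ) (β : Fin d →₀ ℕ) : Finset ℕ :=
  ({pick β} : Finset ℕ) ∪ suppU (pick β) ∪ suppU (posM d n s β)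

lemma card_sH (d n s : ℕ) (β : Fin d →₀ ℕ) : (sH d n s β).card ≤ 9 := by
  unfold sH
  refine le_trans (Finset.card_union_le _ _) ?_
  have h1 := Finset.card_union_le ({pick β} : Finset ℕ) (suppU (pick β))
  have h2 := card_suppU (pick β)
  have h3 := card_suppU (posM d n s β)
  have h4 : ({pick β} : Finset ℕ).card = 1 := Finset.card_singleton _
  omega

lemma readH_supp (d n s : ℕ) (β : Fin d →₀ ℕ) (t : ℕ) (h : (readH d n s β).1 t ≠ 0) :
    t ∈ sH d n s β := by
  unfold readH at h
  unfold sH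
  split_ifs at h with h1
  · exact Finset.mem_union_left _ (readX_supp s (pick β) t h)
  · rw [readM_eq] at h
    exact Finset.mem_union_right _ (uRead_supp _ t h)

def sAcc (d n s : ℕ) : Finset ℕ :=
  suppU d ∪ (DD d n (s-1)).biUnion (fun α => suppU (posM d n (s-1) α))

lemma card_sAcc (d n s : ℕ) : (sAcc d n s).card ≤ 4 + 4 * (DD d n (s-1)).card := by
  unfold sAcc
  refine le_trans (Finset.card_union_le _ _) ?_
  have h1 := card_suppU d
  have h2 : ((DD d n (s-1)).biUnion (fun α => suppU (posM d n (s-1) α))).card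
      ≤ ∑ α ∈ DD d n (s-1), (suppU (posM d n (s-1) α)).card := Finset.card_biUnion_le
  have h3 : ∑ α ∈ DD d n (s-1), (suppU (posM d n (s-1) α)).card
      ≤ ∑ _α ∈ DD d n (s-1), 4 := Finset.sum_le_sum (fun α _ => card_suppU _)
  simp only [Finset.sum_const, smul_eq_mul] at h3
  omega

lemma accIn_supp (d n : ℕ) (c : (Fin d →₀ ℕ) → ℝ) (s t : ℕ)
    (h : (accIn d n c s).1 t ≠ 0) : t ∈ sAcc d n s := by
  by_contra hc
  apply h
  unfold accIn
  unfold sAcc at hc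
  simp only [Finset.mem_union, Finset.mem_biUnion, not_or, not_exists] at hc
  obtain ⟨hc1, hc2⟩ := hc
  have hra : (readAcc d (s-1)).1 t = 0 := by
    unfold readAcc
    split_ifs with hs
    · rfl
    · by_contra hh; exact hc1 (uRead_supp d t hh)
  have hsum : (∑ α ∈ DD d n (s-1), c α • readM d n (s-1) α).1 t
      = ∑ α ∈ DD d n (s-1), c α * (readM d n (s-1) α).1 t := by
    rw [Prod.fst_sum]
    rw [Finset.sum_apply]
    rfl
  have : (readAcc d (s-1) + ∑ α ∈ DD d n (s-1), c α • readM d n (s-1) α).1 t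
      = (readAcc d (s-1)).1 t + (∑ α ∈ DD d n (s-1), c α • readM d n (s-1) α).1 t := rfl
  rw [this, hra, hsum, zero_add]
  apply Finset.sum_eq_zero
  intro α hα
  have : (readM d n (s-1) α).1 t = 0 := by
    by_contra hh
    rw [readM_eq] at hh
    exact hc2 α ⟨by simpa using hα, uRead_supp _ t hh⟩
  rw [this, mul_zero]

/-- per-unit row support bound at hidden layer `s` -/
def suppQ (d n s q : ℕ) : Finset ℕ :=
  if q < d then ({q} : Finset ℕ) ∪ suppU q
  else if q = d then sAcc d n s
  else if q < d + 1 + (DD d n s).card then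
    sH d n (s-1) (half (gt d n s (q - (d+1)))) ∪ sH d n (s-1) (other (gt d n s (q - (d+1))))
  else suppU (posM d n (s-1) (gt d n (s-1) (q - (d+1) - (DD d n s).card)))

lemma card_suppQ (d n s q : ℕ) (hq : q ≠ d) : (suppQ d n s q).card ≤ 18 := by
  unfold suppQ
  split_ifs with h1 h2
  · have ha := card_suppU q
    have hb := Finset.card_union_le ({q} : Finset ℕ) (suppU q)
    simp only [Finset.card_singleton] at hb
    omega
  · refine le_trans (Finset.card_union_le _ _) ?_
    have ha := card_sH d n (s-1) (half (gt d n s (q - (d+1))))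
    have hb := card_sH d n (s-1) (other (gt d n s (q - (d+1))))
    omega
  · have := card_suppU (posM d n (s-1) (gt d n (s-1) (q - (d+1) - (DD d n s).card)))
    omega

lemma unit_supp (d n : ℕ) (c : (Fin d →₀ ℕ) → ℝ) (s q t : ℕ)
    (h : (unit d n c s q).1.1 t ≠ 0 ∨ (unit d n c s q).2.1 t ≠ 0) :
    t ∈ suppQ d n s q := by
  unfold unit at h
  unfold suppQ
  split_ifs at h ⊢ with h1 h2 h3
  · rcases h with h | h
    · exact readX_supp (s-1) q t h
    · exact absurd (show (konst (1:ℝ)).1 t = 0 from rfl) h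
  · rcases h with h | h
    · exact accIn_supp d n c s t h
    · exact absurd (show (konst (1:ℝ)).1 t = 0 from rfl) h
  · rcases h with h | h
    · exact Finset.mem_union_left _ (readH_supp d n (s-1) _ t h)
    · exact Finset.mem_union_right _ (readH_supp d n (s-1) _ t h)
  · rcases h with h | h
    · rw [readM_eq] at h
      exact uRead_supp _ t h
    · exact absurd (show (konst (1:ℝ)).1 t = 0 from rfl) h

/-- generic count of nonzero entries -/
lemma count_A (w w' : ℕ) (A : ℕ → ℕ → ℝ) (S : ℕ → Finset ℕ)
    (hS : ∀ i j, A i j ≠ 0 → j ∈ S i) :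
    (((Finset.range w) ×ˢ (Finset.range w')).filter (fun p => A p.1 p.2 ≠ 0)).card
      ≤ ∑ i ∈ Finset.range w, (S i).card := by
  have hsub : ((Finset.range w) ×ˢ (Finset.range w')).filter (fun p => A p.1 p.2 ≠ 0)
      ⊆ (Finset.range w).biUnion (fun i => ({i} : Finset ℕ) ×ˢ (S i)) := by
    intro pr hpr
    obtain ⟨hmem, hne⟩ := Finset.mem_filter.mp hpr
    obtain ⟨h1, h2⟩ := Finset.mem_product.mp hmem
    apply Finset.mem_biUnion.mpr
    exact ⟨pr.1, h1, Finset.mem_product.mpr ⟨Finset.mem_singleton_self _, hS pr.1 pr.2 hne⟩⟩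
  refine le_trans (Finset.card_le_card hsub) ?_
  refine le_trans Finset.card_biUnion_le ?_
  apply Finset.sum_le_sum
  intro i _
  rw [Finset.card_product]
  simp

end Stmt6
namespace Stmt6

lemma DD_zero_card (d n : ℕ) : (DD d n 0).card = 0 := by
  rw [Finset.card_eq_zero]
  apply Finset.filter_false_of_mem
  intro α hα
  have h2 : 2 ≤ deg α := (mem_M2.mp hα).2
  have := Nat.clog_pos (b := 2) (by norm_num) h2
  unfold jdx
  omega

lemma M2_card_eq (d n : ℕ) :
    (M2 d n).card = ∑ s ∈ Finset.Ico 1 (JJ n + 1), (DD d n s).card := by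
  apply Finset.card_eq_sum_card_fiberwise (f := jdx)
  intro α hα
  have h2 : 2 ≤ deg α := (mem_M2.mp hα).2
  have h1 := Nat.clog_pos (b := 2) (by norm_num) h2
  have h3 := jdx_le_JJ hα
  rw [Finset.mem_coe, Finset.mem_Ico]
  exact ⟨h1, Nat.lt_succ_of_le h3⟩

lemma sum_DD_le (d n : ℕ) :
    ∑ k ∈ Finset.Ico 1 (JJ n + 1), (DD d n k).card ≤ (M2 d n).card :=
  le_of_eq (M2_card_eq d n).symm

lemma sum_DD_pred_le (d n : ℕ) :
    ∑ k ∈ Finset.Ico 1 (JJ n + 1), (DD d n (k-1)).card ≤ (M2 d n).card := by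
  rw [Finset.sum_Ico_eq_sum_range]
  simp only [Nat.add_sub_cancel]
  have h1 : ∑ i ∈ Finset.range (JJ n), (DD d n (1 + i - 1)).card
      = ∑ i ∈ Finset.range (JJ n), (DD d n i).card := by
    apply Finset.sum_congr rfl
    intro i _
    have he : 1 + i - 1 = i := by omega
    rw [he]
  rw [h1]
  have h2 : ∑ i ∈ Finset.range (JJ n), (DD d n i).card
      ≤ ∑ i ∈ Finset.range (JJ n + 1), (DD d n i).card :=
    Finset.sum_le_sum_of_subset (Finset.range_subset_range.mpr (by omega))
  have h3 : ∑ i ∈ Finset.range (JJ n + 1), (DD d n i).card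
      = (DD d n 0).card + ∑ i ∈ Finset.Ico 1 (JJ n + 1), (DD d n i).card := by
    rw [Finset.range_eq_Ico]
    exact Finset.sum_eq_sum_Ico_succ_bot (by omega) _
  rw [DD_zero_card d n] at h3
  rw [M2_card_eq d n]
  omega

lemma wd_hidden (d n k : ℕ) (h1 : 1 ≤ k) (h2 : k ≤ JJ n) :
    wd d n k = 4 * (d + 1) + 4 * (DD d n k).card + 4 * (DD d n (k-1)).card := by
  unfold wd nU
  rw [if_neg (by omega), if_pos h2]
  ring

lemma neurons_bound (d n : ℕ) (c : (Fin d →₀ ℕ) → ℝ) :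
    (net d n c).neurons ≤ 4 * (d + 1) * JJ n + 8 * (M2 d n).card := by
  unfold Net.neurons
  have hL : (net d n c).L = JJ n + 1 := rfl
  rw [hL]
  have hw : ∀ k ∈ Finset.Ico 1 (JJ n + 1), (net d n c).width k
      = 4 * (d + 1) + 4 * (DD d n k).card + 4 * (DD d n (k-1)).card := by
    intro k hk
    rw [Finset.mem_Ico] at hk
    exact wd_hidden d n k hk.1 (by omega)
  rw [Finset.sum_congr rfl hw]
  rw [Finset.sum_add_distrib, Finset.sum_add_distrib, Finset.sum_const]
  have hcard : (Finset.Ico 1 (JJ n + 1)).card = JJ n := by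
    rw [Nat.card_Ico]; omega
  rw [hcard]
  have e1 : ∑ k ∈ Finset.Ico 1 (JJ n + 1), 4 * (DD d n k).card
      = 4 * ∑ k ∈ Finset.Ico 1 (JJ n + 1), (DD d n k).card := by
    rw [Finset.mul_sum]
  have e2 : ∑ k ∈ Finset.Ico 1 (JJ n + 1), 4 * (DD d n (k-1)).card
      = 4 * ∑ k ∈ Finset.Ico 1 (JJ n + 1), (DD d n (k-1)).card := by
    rw [Finset.mul_sum]
  rw [e1, e2]
  have hs1 := sum_DD_le d n
  have hs2 := sum_DD_pred_le d n
  simp only [smul_eq_mul]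
  have hcomm : JJ n * (4 * (d+1)) = 4 * (d+1) * JJ n := by ring
  rw [hcomm]
  generalize 4 * (d+1) * JJ n = W
  omega

/-- sum over `range (4*m)` of a function of `i/4` -/
lemma sum_div4 (m : ℕ) (f : ℕ → ℕ) :
    ∑ i ∈ Finset.range (4*m), f (i/4) = 4 * ∑ q ∈ Finset.range m, f q := by
  induction m with
  | zero => simp
  | succ m ih =>
      have h4 : 4*(m+1) = (4*m) + 1 + 1 + 1 + 1 := by ring
      rw [h4, Finset.sum_range_succ, Finset.sum_range_succ, Finset.sum_range_succ,
        Finset.sum_range_succ, ih, Finset.sum_range_succ]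
      have e0 : (4*m)/4 = m := by omega
      have e1 : (4*m+1)/4 = m := by omega
      have e2 : (4*m+1+1)/4 = m := by omega
      have e3 : (4*m+1+1+1)/4 = m := by omega
      rw [e0, e1, e2, e3]
      ring

lemma layer_weight_bound (d n : ℕ) (c : (Fin d →₀ ℕ) → ℝ) (k : ℕ)
    (h1 : 1 ≤ k) (h2 : k ≤ JJ n) :
    (((Finset.range ((net d n c).width k)) ×ˢ (Finset.range ((net d n c).width (k - 1)))).filter
        (fun pr => (net d n c).A k pr.1 pr.2 ≠ 0)).card
      + ((Finset.range ((net d n c).width k)).filter (fun i => (net d n c).b k i ≠ 0)).card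
      ≤ 76 * nU d n k + 16 + 16 * (DD d n (k-1)).card := by
  have hwk : (net d n c).width k = 4 * nU d n k := by
    show wd d n k = _
    unfold wd
    rw [if_neg (by omega), if_pos h2]
  have hS : ∀ i j, (net d n c).A k i j ≠ 0 → j ∈ suppQ d n k (i/4) := by
    intro i j hA
    apply unit_supp d n c k (i/4) j
    by_contra hc
    push_neg at hc
    apply hA
    show (if k = JJ n + 1 then _ else _) = 0
    rw [if_neg (by omega)]
    rw [hc.1, hc.2]
    ring
  have hA := count_A ((net d n c).width k) ((net d n c).width (k-1))
    ((net d n c).A k) (fun i => suppQ d n k (i/4)) hS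
  rw [hwk] at hA
  rw [sum_div4 (nU d n k) (fun q => (suppQ d n k q).card)] at hA
  rw [← hwk] at hA
  have hq2 : ∑ q ∈ Finset.range (nU d n k), (suppQ d n k q).card
      ≤ 18 * nU d n k + (4 + 4 * (DD d n (k-1)).card) := by
    have hptw : ∀ q ∈ Finset.range (nU d n k), (suppQ d n k q).card
        ≤ 18 + (if q = d then 4 + 4 * (DD d n (k-1)).card else 0) := by
      intro q _
      by_cases hqd : q = d
      · rw [if_pos hqd]
        have hcd : (suppQ d n k q).card ≤ 4 + 4 * (DD d n (k-1)).card := by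
          unfold suppQ
          rw [if_neg (by omega), if_pos hqd]
          exact card_sAcc d n k
        omega
      · rw [if_neg hqd, add_zero]
        exact card_suppQ d n k q hqd
    refine le_trans (Finset.sum_le_sum hptw) ?_
    rw [Finset.sum_add_distrib, Finset.sum_const]
    rw [Finset.sum_ite_eq' (Finset.range (nU d n k)) d
      (fun _ => 4 + 4 * (DD d n (k-1)).card)]
    simp only [Finset.card_range, smul_eq_mul]
    split_ifs <;> omega
  have hb : ((Finset.range ((net d n c).width k)).filter
      (fun i => (net d n c).b k i ≠ 0)).card ≤ 4 * nU d n k := by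
    refine le_trans (Finset.card_filter_le _ _) ?_
    rw [Finset.card_range, hwk]
  omega

end Stmt6
namespace Stmt6

def SF (d n : ℕ) : Finset ℕ :=
  suppU d ∪ (DD d n (JJ n)).biUnion (fun α => suppU (posM d n (JJ n) α))
    ∪ ((Mono d n).filter (fun α => deg α = 1)).biUnion
        (fun α => ({pick α} : Finset ℕ) ∪ suppU (pick α))

lemma card_SF (d n : ℕ) : (SF d n).card
    ≤ 4 + 4 * (DD d n (JJ n)).card + 5 * ((Mono d n).filter (fun α => deg α = 1)).card := by
  unfold SF
  refine le_trans (Finset.card_union_le _ _) ?_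
  have h0 := Finset.card_union_le (suppU d)
    ((DD d n (JJ n)).biUnion (fun α => suppU (posM d n (JJ n) α)))
  have h1 := card_suppU d
  have h2 : ((DD d n (JJ n)).biUnion (fun α => suppU (posM d n (JJ n) α))).card
      ≤ ∑ α ∈ DD d n (JJ n), (suppU (posM d n (JJ n) α)).card := Finset.card_biUnion_le
  have h3 : ∑ α ∈ DD d n (JJ n), (suppU (posM d n (JJ n) α)).card
      ≤ ∑ _α ∈ DD d n (JJ n), 4 := Finset.sum_le_sum (fun α _ => card_suppU _)
  have h4 : (((Mono d n).filter (fun α => deg α = 1)).biUnion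
      (fun α => ({pick α} : Finset ℕ) ∪ suppU (pick α))).card
      ≤ ∑ α ∈ (Mono d n).filter (fun α => deg α = 1),
          (({pick α} : Finset ℕ) ∪ suppU (pick α)).card := Finset.card_biUnion_le
  have h5 : ∑ α ∈ (Mono d n).filter (fun α => deg α = 1),
      (({pick α} : Finset ℕ) ∪ suppU (pick α)).card
      ≤ ∑ _α ∈ (Mono d n).filter (fun α => deg α = 1), 5 := by
    apply Finset.sum_le_sum
    intro α _
    refine le_trans (Finset.card_union_le _ _) ?_
    have := card_suppU (pick α)
    simp only [Finset.card_singleton]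
    omega
  simp only [Finset.sum_const, smul_eq_mul] at h3 h5
  omega

lemma Fout_supp (d n : ℕ) (c : (Fin d →₀ ℕ) → ℝ) (t : ℕ)
    (h : (Fout d n c).1 t ≠ 0) : t ∈ SF d n := by
  by_contra hc
  apply h
  unfold SF at hc
  simp only [Finset.mem_union, Finset.mem_biUnion, not_or, not_exists] at hc
  obtain ⟨⟨hc1, hc2⟩, hc3⟩ := hc
  unfold Fout
  have e1 : (readAcc d (JJ n)).1 t = 0 := by
    unfold readAcc
    split_ifs with hs
    · rfl
    · by_contra hh; exact hc1 (uRead_supp d t hh)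
  have e2 : (∑ α ∈ DD d n (JJ n), c α • readM d n (JJ n) α).1 t = 0 := by
    rw [Prod.fst_sum, Finset.sum_apply]
    apply Finset.sum_eq_zero
    intro α hα
    have : (readM d n (JJ n) α).1 t = 0 := by
      by_contra hh
      rw [readM_eq] at hh
      exact hc2 α ⟨by simpa using hα, uRead_supp _ t hh⟩
    show c α * (readM d n (JJ n) α).1 t = 0
    rw [this, mul_zero]
  have e3 : (∑ α ∈ (Mono d n).filter (fun α => deg α = 1),
      c α • readX (JJ n) (pick α)).1 t = 0 := by
    rw [Prod.fst_sum, Finset.sum_apply]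
    apply Finset.sum_eq_zero
    intro α hα
    have : (readX (JJ n) (pick α)).1 t = 0 := by
      by_contra hh
      exact hc3 α ⟨by simpa using hα, Finset.mem_union.mp (readX_supp (JJ n) (pick α) t hh)⟩
    show c α * (readX (JJ n) (pick α)).1 t = 0
    rw [this, mul_zero]
  show (readAcc d (JJ n) + _ + _ + konst _).1 t = 0
  have : (readAcc d (JJ n) + (∑ α ∈ DD d n (JJ n), c α • readM d n (JJ n) α)
      + (∑ α ∈ (Mono d n).filter (fun α => deg α = 1), c α • readX (JJ n) (pick α))
      + konst (∑ α ∈ (Mono d n).filter (fun α => deg α = 0), c α)).1 t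
      = (readAcc d (JJ n)).1 t
        + (∑ α ∈ DD d n (JJ n), c α • readM d n (JJ n) α).1 t
        + (∑ α ∈ (Mono d n).filter (fun α => deg α = 1), c α • readX (JJ n) (pick α)).1 t
        + 0 := rfl
  rw [this, e1, e2, e3]
  ring

lemma final_layer_bound (d n : ℕ) (c : (Fin d →₀ ℕ) → ℝ) :
    (((Finset.range ((net d n c).width (JJ n + 1)))
        ×ˢ (Finset.range ((net d n c).width (JJ n + 1 - 1)))).filter
        (fun pr => (net d n c).A (JJ n + 1) pr.1 pr.2 ≠ 0)).card
      + ((Finset.range ((net d n c).width (JJ n + 1))).filter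
          (fun i => (net d n c).b (JJ n + 1) i ≠ 0)).card
      ≤ (SF d n).card + 1 := by
  have hS : ∀ i j, (net d n c).A (JJ n + 1) i j ≠ 0 → j ∈ SF d n := by
    intro i j hA
    have : (net d n c).A (JJ n + 1) i j = if i = 0 then (Fout d n c).1 j else 0 := by
      show (if JJ n + 1 = JJ n + 1 then _ else _) = _
      rw [if_pos rfl]
    rw [this] at hA
    split_ifs at hA with hi
    · exact Fout_supp d n c j hA
    · exact absurd rfl hA
  have hA := count_A ((net d n c).width (JJ n + 1)) ((net d n c).width (JJ n + 1 - 1))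
    ((net d n c).A (JJ n + 1)) (fun _ => SF d n) hS
  have hw : (net d n c).width (JJ n + 1) = 1 := by
    show wd d n (JJ n + 1) = 1
    unfold wd
    rw [if_neg (by omega), if_neg (by omega)]
  rw [hw] at hA ⊢
  simp only [Finset.sum_const, Finset.card_range, one_smul] at hA
  have hb : ((Finset.range 1).filter (fun i => (net d n c).b (JJ n + 1) i ≠ 0)).card ≤ 1 := by
    refine le_trans (Finset.card_filter_le _ _) ?_
    simp
  omega

lemma weights_bound (d n : ℕ) (c : (Fin d →₀ ℕ) → ℝ) :
    (net d n c).nonzeroWeights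
      ≤ 76 * ((d+1) * JJ n + 2 * (M2 d n).card) + 16 * JJ n + 16 * (M2 d n).card
        + ((SF d n).card + 1) := by
  unfold Net.nonzeroWeights
  have hL : (net d n c).L = JJ n + 1 := rfl
  rw [hL]
  rw [Finset.sum_Icc_succ_top (by omega : 1 ≤ JJ n + 1)]
  have hmid : ∑ k ∈ Finset.Icc 1 (JJ n),
      ((((Finset.range ((net d n c).width k)) ×ˢ (Finset.range ((net d n c).width (k - 1)))).filter
          (fun pr => (net d n c).A k pr.1 pr.2 ≠ 0)).card
        + ((Finset.range ((net d n c).width k)).filter (fun i => (net d n c).b k i ≠ 0)).card)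
      ≤ ∑ k ∈ Finset.Icc 1 (JJ n), (76 * nU d n k + 16 + 16 * (DD d n (k-1)).card) := by
    apply Finset.sum_le_sum
    intro k hk
    rw [Finset.mem_Icc] at hk
    exact layer_weight_bound d n c k hk.1 hk.2
  have hnu : ∑ k ∈ Finset.Icc 1 (JJ n), (76 * nU d n k + 16 + 16 * (DD d n (k-1)).card)
      ≤ 76 * ((d+1) * JJ n + 2 * (M2 d n).card) + 16 * JJ n + 16 * (M2 d n).card := by
    rw [← Finset.Ico_add_one_right_eq_Icc]
    rw [Finset.sum_add_distrib, Finset.sum_add_distrib, Finset.sum_const]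
    have hc1 : (Finset.Ico 1 (JJ n + 1)).card = JJ n := by rw [Nat.card_Ico]; omega
    rw [hc1]
    have e1 : ∑ k ∈ Finset.Ico 1 (JJ n + 1), 76 * nU d n k
        = 76 * ∑ k ∈ Finset.Ico 1 (JJ n + 1), nU d n k := by rw [Finset.mul_sum]
    have e2 : ∑ k ∈ Finset.Ico 1 (JJ n + 1), 16 * (DD d n (k-1)).card
        = 16 * ∑ k ∈ Finset.Ico 1 (JJ n + 1), (DD d n (k-1)).card := by rw [Finset.mul_sum]
    rw [e1, e2]
    have h3 : ∑ k ∈ Finset.Ico 1 (JJ n + 1), nU d n k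
        ≤ (d+1) * JJ n + 2 * (M2 d n).card := by
      unfold nU
      rw [Finset.sum_add_distrib, Finset.sum_add_distrib, Finset.sum_const]
      rw [hc1]
      have := sum_DD_le d n
      have := sum_DD_pred_le d n
      simp only [smul_eq_mul]
      have hcomm : JJ n * (d + 1) = (d+1) * JJ n := by ring
      rw [hcomm]
      generalize (d+1) * JJ n = W at *
      omega
    have h4 := sum_DD_pred_le d n
    simp only [smul_eq_mul]
    generalize hW : (M2 d n).card = M at *
    omega
  have hfin := final_layer_bound d n c
  omega

end Stmt6

namespace Stmt6

lemma eval_poly (d n : ℕ) (p : MvPolynomial (Fin d) ℝ) (hp : p.totalDegree ≤ n) (x : ℕ → ℝ) :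
    MvPolynomial.eval (fun i : Fin d => x i) p
      = ∑ α ∈ Mono d n, (MvPolynomial.coeff α p) * mval α x := by
  rw [MvPolynomial.eval_eq']
  apply Finset.sum_subset
  · intro α hα
    rw [mem_Mono, deg_eq_sum]
    exact le_trans (MvPolynomial.le_totalDegree hα) hp
  · intro α _ hα
    rw [MvPolynomial.notMem_support_iff.mp hα, zero_mul]

end Stmt6


/-- any `d`-variate polynomial of total degree at most `n` is realized by a
σ₂-network with at most `d⌊log₂ n⌋ + d` hidden layers and `O(binom(n+d,d))` neurons and
nonzero weights. -/
theorem stmt_6 :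
    ∃ C : ℕ, 0 < C ∧
      ∀ d : ℕ, 1 ≤ d → ∀ n : ℕ, 1 ≤ n →
        ∀ p : MvPolynomial (Fin d) ℝ, p.totalDegree ≤ n →
          ∃ Φ : Net,
            1 ≤ Φ.L ∧
            Φ.width 0 = d ∧
            Φ.width Φ.L = 1 ∧
            Φ.hiddenLayers ≤ d * Nat.log 2 n + d ∧
            Φ.neurons ≤ C * (n + d).choose d ∧
            Φ.nonzeroWeights ≤ C * (n + d).choose d ∧
            ∀ x : ℕ → ℝ, Φ.realize (repu 2) x 0 =
              MvPolynomial.eval (fun i : Fin d => x i) p := by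
  classical
  refine ⟨1000, by norm_num, ?_⟩
  intro d hd n hn p hp
  set c : (Fin d →₀ ℕ) → ℝ := fun α => MvPolynomial.coeff α p with hc
  refine ⟨Stmt6.net d n c, ?_, ?_, ?_, ?_, ?_, ?_, ?_⟩
  · show 1 ≤ Stmt6.JJ n + 1
    omega
  · rfl
  · show Stmt6.wd d n (Stmt6.JJ n + 1) = 1
    unfold Stmt6.wd
    rw [if_neg (by omega), if_neg (by omega)]
  · show Stmt6.JJ n + 1 - 1 ≤ d * Nat.log 2 n + d
    have h1 : Stmt6.JJ n ≤ Nat.log 2 n + 1 := Stmt6.clog_le_log_succ n hn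
    have h2 : 1 * Nat.log 2 n ≤ d * Nat.log 2 n := Nat.mul_le_mul_right _ hd
    omega
  · -- neurons
    have hb := Stmt6.neurons_bound d n c
    have hN : d * n + 1 ≤ (n + d).choose d := by
      have h0 := Stmt6.choose_ge n hn d hd
      have : n * d = d * n := Nat.mul_comm n d
      omega
    have hJn : Stmt6.JJ n ≤ n := Stmt6.clog_le_self n
    have hM2 : (Stmt6.M2 d n).card ≤ (n + d).choose d :=
      le_trans (Finset.card_filter_le _ _) (Stmt6.card_Mono_le n)
    have h1 : (d+1) * Stmt6.JJ n ≤ (d+1) * n := Nat.mul_le_mul_left _ hJn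
    have h2 : (d+1) * n = d * n + n := by ring
    have h3 : 1 * n ≤ d * n := Nat.mul_le_mul_right _ hd
    have h4 : 4 * ((d+1) * Stmt6.JJ n) = 4 * (d+1) * Stmt6.JJ n := by ring
    omega
  · -- weights
    have hb := Stmt6.weights_bound d n c
    have hN : d * n + 1 ≤ (n + d).choose d := by
      have h0 := Stmt6.choose_ge n hn d hd
      have : n * d = d * n := Nat.mul_comm n d
      omega
    have hJn : Stmt6.JJ n ≤ n := Stmt6.clog_le_self n
    have hM2 : (Stmt6.M2 d n).card ≤ (n + d).choose d :=
      le_trans (Finset.card_filter_le _ _) (Stmt6.card_Mono_le n)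
    have hSF : (Stmt6.SF d n).card
        ≤ 4 + 4 * (Stmt6.DD d n (Stmt6.JJ n)).card
          + 5 * ((Stmt6.Mono d n).filter (fun α => Stmt6.deg α = 1)).card :=
      Stmt6.card_SF d n
    have hDDJ : (Stmt6.DD d n (Stmt6.JJ n)).card ≤ (Stmt6.M2 d n).card :=
      Finset.card_filter_le _ _
    have hm1 : ((Stmt6.Mono d n).filter (fun α => Stmt6.deg α = 1)).card
        ≤ (n + d).choose d :=
      le_trans (Finset.card_filter_le _ _) (Stmt6.card_Mono_le n)
    have h1 : (d+1) * Stmt6.JJ n ≤ (d+1) * n := Nat.mul_le_mul_left _ hJn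
    have h2 : (d+1) * n = d * n + n := by ring
    have h3 : 1 * n ≤ d * n := Nat.mul_le_mul_right _ hd
    omega
  · -- realization
    intro x
    rw [Stmt6.net_realize d n c x, Stmt6.eval_poly d n p hp x]
end
end
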